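/- arXiv:2508.14714 — 4 statements merged into one kernel-verified Lean document; each statement's English description precedes it below -/
import Mathlib

section
/- Let n ≥ 4 be an integer. For every permutation α of ZMod n and every chord {i,j} ∈ E, there exist a sign ε ∈ {1, −1} and integer exponents m : E → ℤ such that for every injective z : ZMod n → ℝ one has u_{ij}(z ∘ α) = ε · ∏_{e ∈ E} u_e(z)^{m(e)}. (In the paper's notation, the dihedral coordinate u^α_{ij} of the relabeled configuration is, identically on the configuration space, a signed Laurent monomial in the standard dihedral coordinates.) -/
namespace M0n

/-- `{i, j}` is a chord of the `n`-gon: `j ∉ {i-1, i, i+1}`. -/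
def IsChord (n : ℕ) (p : Sym2 (ZMod n)) : Prop :=
  ∀ i j : ZMod n, p = s(i, j) → j ≠ i - 1 ∧ j ≠ i ∧ j ≠ i + 1

instance (n : ℕ) [NeZero n] : DecidablePred (IsChord n) := fun p =>
  inferInstanceAs (Decidable (∀ i j : ZMod n, p = s(i, j) → j ≠ i - 1 ∧ j ≠ i ∧ j ≠ i + 1))

/-- The finite set `E` of chords of the `n`-gon. -/
def chords (n : ℕ) [NeZero n] : Finset (Sym2 (ZMod n)) :=
  Finset.univ.filter (IsChord n)

/-- `x` lies in the cyclic open interval `{i+1, …, j-1}` from `i` to `j`. -/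
def CycBtw {n : ℕ} (i x j : ZMod n) : Prop :=
  0 < (x - i).val ∧ (x - i).val < (j - i).val

instance {n : ℕ} (i x j : ZMod n) : Decidable (CycBtw i x j) :=
  inferInstanceAs (Decidable (0 < (x - i).val ∧ (x - i).val < (j - i).val))

/-- Two chords cross: exactly one endpoint of `q` lies in the cyclic open interval
from `i` to `j`, for every ordered representation `(i, j)` of `p`. -/
def Crosses (n : ℕ) (p q : Sym2 (ZMod n)) : Prop :=
  ∀ i j k l : ZMod n, p = s(i, j) → q = s(k, l) → Xor (CycBtw i k j) (CycBtw i l j)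

instance (n : ℕ) [NeZero n] (p q : Sym2 (ZMod n)) : Decidable (Crosses n p q) :=
  inferInstanceAs (Decidable (∀ i j k l : ZMod n,
    p = s(i, j) → q = s(k, l) → Xor (CycBtw i k j) (CycBtw i l j)))

/-- The dihedral coordinate (cross-ratio)
`u_{ij}(z) = ((z i - z (j+1)) (z (i+1) - z j)) / ((z i - z j) (z (i+1) - z (j+1)))`,
well defined on unordered pairs. -/
def u {n : ℕ} {K : Type*} [Field K] (z : ZMod n → K) : Sym2 (ZMod n) → K :=
  Sym2.lift ⟨fun i j =>
    ((z i - z (j + 1)) * (z (i + 1) - z j)) / ((z i - z j) * (z (i + 1) - z (j + 1))), by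
      intro i j
      have h1 : (z i - z (j + 1)) * (z (i + 1) - z j)
          = (z j - z (i + 1)) * (z (j + 1) - z i) := by ring
      have h2 : (z i - z j) * (z (i + 1) - z (j + 1))
          = (z j - z i) * (z (j + 1) - z (i + 1)) := by ring
      dsimp only
      rw [h1, h2]⟩

/-- The cyclic interval `{a, a+1, …, a+m-1}` in `ZMod n`. -/
def cycInt {n : ℕ} (a : ZMod n) (m : ℕ) : Finset (ZMod n) :=
  (Finset.range m).image fun t : ℕ => a + (t : ZMod n)

/-- A partition of `ZMod n` into four nonempty cyclic intervals `A, B, C, D`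
appearing in this cyclic order. -/
structure CyclicFourPartition (n : ℕ) where
  a : ZMod n
  p : ℕ
  q : ℕ
  r : ℕ
  t : ℕ
  hp : 0 < p
  hq : 0 < q
  hr : 0 < r
  ht : 0 < t
  hsum : p + q + r + t = n

namespace CyclicFourPartition

variable {n : ℕ} (P : CyclicFourPartition n)

def A : Finset (ZMod n) := cycInt P.a P.p
def B : Finset (ZMod n) := cycInt (P.a + (P.p : ZMod n)) P.q
def C : Finset (ZMod n) := cycInt (P.a + (P.p : ZMod n) + (P.q : ZMod n)) P.r
def D : Finset (ZMod n) := cycInt (P.a + (P.p : ZMod n) + (P.q : ZMod n) + (P.r : ZMod n)) P.t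

end CyclicFourPartition

/-- A sign pattern is consistent if it does not contradict any extended u-relation:
for every cyclic 4-partition `(A,B,C,D)`, one of the two products of signs is `1`. -/
def Consistent (n : ℕ) (s : Sym2 (ZMod n) → ℤ) : Prop :=
  ∀ P : CyclicFourPartition n,
    (∏ x ∈ P.A, ∏ y ∈ P.C, s s(x, y)) = 1 ∨ (∏ x ∈ P.B, ∏ y ∈ P.D, s s(x, y)) = 1

/-- A sign pattern is realizable if it is the sign vector of the dihedral coordinates
of some injective real configuration. -/
def Realizable (n : ℕ) [NeZero n] (s : Sym2 (ZMod n) → ℤ) : Prop :=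
  ∃ z : ZMod n → ℝ, Function.Injective z ∧ ∀ e ∈ chords n, Real.sign (u z e) = (s e : ℝ)

/-- The length of a chord `{i,j}`: `min (d, n - d)` where `d = (j - i).val`. -/
def chordLength (n : ℕ) (p : Sym2 (ZMod n)) : ℕ :=
  Sym2.lift ⟨fun i j => min (j - i).val (i - j).val, fun _ _ => min_comm _ _⟩ p

/-- `Neg z`: the number of negative chords of a real configuration. -/
noncomputable def negCount (n : ℕ) [NeZero n] (z : ZMod n → ℝ) : ℕ :=
  Set.ncard {e : Sym2 (ZMod n) | e ∈ chords n ∧ u z e < 0}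

/-- The set of real points of `M_{0,n}` in its dihedral embedding:
nowhere-zero real solutions of all primitive u-relations in `ℝ^E`. -/
def Vset (n : ℕ) [NeZero n] : Set ({e : Sym2 (ZMod n) // e ∈ chords n} → ℝ) :=
  {w | (∀ c, w c ≠ 0) ∧ ∀ c,
    w c + ∏ e ∈ Finset.univ.filter
        (fun e : {e : Sym2 (ZMod n) // e ∈ chords n} => Crosses n e.1 c.1), w e = 1}

/-- The part `M_{0,n}(ℝ_s)` of `V` in the open orthant given by the sign pattern `s`. -/
def VsSet (n : ℕ) [NeZero n] (s : Sym2 (ZMod n) → ℤ) :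
    Set ({e : Sym2 (ZMod n) // e ∈ chords n} → ℝ) :=
  {w ∈ Vset n | ∀ c : {e : Sym2 (ZMod n) // e ∈ chords n}, Real.sign (w c) = (s c.1 : ℝ)}

/-! ### Auxiliary machinery for Statement 4 -/

section Aux

variable {n : ℕ} [NeZero n]

/-- The general cross-ratio `((z a - z d)(z b - z c)) / ((z a - z c)(z b - z d))`. -/
noncomputable def cr (z : ZMod n → ℝ) (a b c d : ZMod n) : ℝ :=
  ((z a - z d) * (z b - z c)) / ((z a - z c) * (z b - z d))

lemma u_mk (z : ZMod n → ℝ) (i j : ZMod n) :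
    u z s(i, j) = cr z i (i + 1) j (j + 1) := rfl

lemma chord_conds {i j : ZMod n} (h : s(i, j) ∈ chords n) :
    j ≠ i - 1 ∧ j ≠ i ∧ j ≠ i + 1 :=
  (Finset.mem_filter.mp h).2 i j rfl

lemma mem_chords_of {a b : ZMod n} (h1 : b ≠ a - 1) (h2 : b ≠ a) (h3 : b ≠ a + 1) :
    s(a, b) ∈ chords n := by
  refine Finset.mem_filter.mpr ⟨Finset.mem_univ _, ?_⟩
  intro i j hij
  rw [Sym2.eq_iff] at hij
  rcases hij with ⟨rfl, rfl⟩ | ⟨rfl, rfl⟩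
  · exact ⟨h1, h2, h3⟩
  · refine ⟨fun h => h3 (by rw [h]; ring), fun h => h2 h.symm, fun h => h1 (by rw [h]; ring)⟩

lemma chord_pairwise_ne {i j : ZMod n} (h : s(i, j) ∈ chords n) :
    i ≠ j ∧ i ≠ j + 1 ∧ i + 1 ≠ j ∧ i + 1 ≠ j + 1 := by
  obtain ⟨h1, h2, h3⟩ := chord_conds h
  refine ⟨fun h => h2 h.symm, fun h => h1 (by rw [h]; ring), fun h => h3 h.symm,
    fun h => h2 (add_right_cancel h).symm⟩

lemma u_ne_zero {z : ZMod n → ℝ} (hz : Function.Injective z) {e : Sym2 (ZMod n)}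
    (he : e ∈ chords n) : u z e ≠ 0 := by
  induction e using Sym2.ind with
  | _ i j =>
    obtain ⟨h1, h2, h3, h4⟩ := chord_pairwise_ne he
    rw [u_mk, cr]
    exact div_ne_zero
      (mul_ne_zero (sub_ne_zero.mpr (hz.ne h2)) (sub_ne_zero.mpr (hz.ne h3)))
      (mul_ne_zero (sub_ne_zero.mpr (hz.ne h1)) (sub_ne_zero.mpr (hz.ne h4)))

/-- `F` is, identically on injective configurations, a signed Laurent monomial
in the dihedral coordinates. -/
def Mono (n : ℕ) [NeZero n] (F : (ZMod n → ℝ) → ℝ) : Prop :=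
  ∃ (ε : ℝ) (m : Sym2 (ZMod n) → ℤ), (ε = 1 ∨ ε = -1) ∧
    ∀ z : ZMod n → ℝ, Function.Injective z → F z = ε * ∏ e ∈ chords n, u z e ^ m e

lemma Mono_congr {F G : (ZMod n → ℝ) → ℝ}
    (h : ∀ z : ZMod n → ℝ, Function.Injective z → F z = G z) (hG : Mono n G) : Mono n F := by
  obtain ⟨ε, m, hε, hm⟩ := hG
  exact ⟨ε, m, hε, fun z hz => (h z hz).trans (hm z hz)⟩

lemma Mono_one : Mono n (fun _ => 1) := by
  refine ⟨1, 0, Or.inl rfl, fun z hz => ?_⟩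
  simp

lemma Mono_u {e : Sym2 (ZMod n)} (he : e ∈ chords n) : Mono n (fun z => u z e) := by
  classical
  refine ⟨1, fun e' => if e' = e then 1 else 0, Or.inl rfl, fun z hz => ?_⟩
  rw [one_mul, Finset.prod_eq_single_of_mem e he (fun b _ hb => by simp [hb])]
  simp

lemma Mono_mul {F G : (ZMod n → ℝ) → ℝ} (hF : Mono n F) (hG : Mono n G) :
    Mono n (fun z => F z * G z) := by
  obtain ⟨ε₁, m₁, h₁, k₁⟩ := hF
  obtain ⟨ε₂, m₂, h₂, k₂⟩ := hG
  refine ⟨ε₁ * ε₂, m₁ + m₂, ?_, fun z hz => ?_⟩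
  · rcases h₁ with rfl | rfl <;> rcases h₂ with rfl | rfl <;> norm_num
  · show F z * G z = _
    rw [k₁ z hz, k₂ z hz]
    rw [show ε₁ * (∏ e ∈ chords n, u z e ^ m₁ e) * (ε₂ * ∏ e ∈ chords n, u z e ^ m₂ e)
        = ε₁ * ε₂ * ((∏ e ∈ chords n, u z e ^ m₁ e) * ∏ e ∈ chords n, u z e ^ m₂ e) by ring,
      ← Finset.prod_mul_distrib]
    congr 1
    refine Finset.prod_congr rfl fun e he => ?_
    rw [← zpow_add₀ (u_ne_zero hz he)]
    rfl

lemma Mono_inv {F : (ZMod n → ℝ) → ℝ} (hF : Mono n F) : Mono n (fun z => (F z)⁻¹) := by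
  obtain ⟨ε, m, hε, hm⟩ := hF
  refine ⟨ε, -m, hε, fun z hz => ?_⟩
  show (F z)⁻¹ = _
  rw [hm z hz, mul_inv, ← Finset.prod_inv_distrib]
  congr 1
  · rcases hε with rfl | rfl <;> norm_num
  · refine Finset.prod_congr rfl fun e he => ?_
    rw [← zpow_neg]
    rfl

lemma Mono_neg {F : (ZMod n → ℝ) → ℝ} (hF : Mono n F) : Mono n (fun z => -F z) := by
  obtain ⟨ε, m, hε, hm⟩ := hF
  refine ⟨-ε, m, ?_, fun z hz => ?_⟩
  · rcases hε with rfl | rfl <;> norm_num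
  · show -F z = _
    rw [hm z hz]; ring

lemma Mono_prod {ι : Type*} (s : Finset ι) (F : ι → (ZMod n → ℝ) → ℝ)
    (h : ∀ i ∈ s, Mono n (F i)) : Mono n (fun z => ∏ i ∈ s, F i z) := by
  classical
  induction s using Finset.induction with
  | empty => simpa using (Mono_one (n := n))
  | insert a s' hi ih =>
    simp only [Finset.prod_insert hi]
    exact Mono_mul (h a (Finset.mem_insert_self a s'))
      (ih fun i hi' => h i (Finset.mem_insert_of_mem hi'))

/-! #### Cross-ratio identities -/

lemma cr_split_right (z : ZMod n → ℝ) {a b c d : ZMod n} (y : ZMod n)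
    (h1 : z a - z c ≠ 0) (h2 : z b - z d ≠ 0) (h3 : z a - z y ≠ 0) (h4 : z b - z y ≠ 0) :
    cr z a b c d = cr z a b c y * cr z a b y d := by
  unfold cr
  rw [div_mul_div_comm,
    div_eq_div_iff (mul_ne_zero h1 h2) (mul_ne_zero (mul_ne_zero h1 h4) (mul_ne_zero h3 h2))]
  ring

lemma cr_split_left (z : ZMod n → ℝ) {a b c d : ZMod n} (x : ZMod n)
    (h1 : z a - z c ≠ 0) (h2 : z b - z d ≠ 0) (h3 : z x - z c ≠ 0) (h4 : z x - z d ≠ 0) :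
    cr z a b c d = cr z a x c d * cr z x b c d := by
  unfold cr
  rw [div_mul_div_comm,
    div_eq_div_iff (mul_ne_zero h1 h2) (mul_ne_zero (mul_ne_zero h1 h4) (mul_ne_zero h3 h2))]
  ring

/-- `(cr z b a c d)⁻¹ = cr z a b c d`. -/
lemma cr_swap_fst (z : ZMod n → ℝ) (a b c d : ZMod n) :
    (cr z b a c d)⁻¹ = cr z a b c d := by
  unfold cr
  rw [inv_div, mul_comm (z b - z c) (z a - z d), mul_comm (z b - z d) (z a - z c)]

/-- `(cr z a b d c)⁻¹ = cr z a b c d`. -/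
lemma cr_swap_snd (z : ZMod n → ℝ) (a b c d : ZMod n) :
    (cr z a b d c)⁻¹ = cr z a b c d := by
  unfold cr
  rw [inv_div, mul_comm (z a - z d) (z b - z c), mul_comm (z a - z c) (z b - z d)]

lemma cr_rev (z : ZMod n → ℝ) (a b c d : ZMod n) :
    cr z b a d c = cr z a b c d := by
  unfold cr
  rw [mul_comm (z b - z c) (z a - z d), mul_comm (z b - z d) (z a - z c)]

/-- The crossing identity: `cr z a b c d = -(cr z a c b d * cr z c b a d)`. -/
lemma cr_cross (z : ZMod n → ℝ) {a b c d : ZMod n}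
    (h1 : z a - z c ≠ 0) (h2 : z b - z d ≠ 0) (h3 : z a - z b ≠ 0) (h4 : z c - z d ≠ 0) :
    cr z a b c d = -(cr z a c b d * cr z c b a d) := by
  unfold cr
  rw [div_mul_div_comm, ← neg_div]
  rw [div_eq_div_iff (mul_ne_zero h1 h2)
    (mul_ne_zero (mul_ne_zero h3 h4)
      (mul_ne_zero (fun h => h1 (by linarith [sub_eq_zero.mp h])) h2))]
  ring

/-! #### Telescoping -/

lemma cr_telescope_right (z : ZMod n → ℝ) (a b c : ZMod n) (r : ℕ)
    (H : ∀ y ≤ r, z a - z (c + (y : ZMod n)) ≠ 0 ∧ z b - z (c + (y : ZMod n)) ≠ 0) :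
    cr z a b c (c + (r : ZMod n)) =
      ∏ y ∈ Finset.range r, cr z a b (c + (y : ZMod n)) (c + (y : ZMod n) + 1) := by
  induction r with
  | zero =>
    have h := H 0 le_rfl
    simp only [Nat.cast_zero, add_zero] at h ⊢
    rw [Finset.prod_range_zero, cr, mul_comm (z a - z c) (z b - z c)]
    exact div_self (mul_ne_zero h.2 h.1)
  | succ r ih =>
    have hcast : ((r + 1 : ℕ) : ZMod n) = (r : ZMod n) + 1 := by push_cast; ring
    have h0 := H 0 (Nat.zero_le _)
    simp only [Nat.cast_zero, add_zero] at h0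
    have hr := H r (Nat.le_succ r)
    have hr1 := H (r + 1) le_rfl
    rw [hcast, ← add_assoc] at hr1
    rw [Finset.prod_range_succ, ← ih (fun y hy => H y (hy.trans (Nat.le_succ r))),
      hcast, ← add_assoc]
    exact cr_split_right z (c + (r : ZMod n)) h0.1 hr1.2 hr.1 hr.2

lemma cr_telescope_left (z : ZMod n → ℝ) (a c d : ZMod n) (p : ℕ)
    (H : ∀ x ≤ p, z (a + (x : ZMod n)) - z c ≠ 0 ∧ z (a + (x : ZMod n)) - z d ≠ 0) :
    cr z a (a + (p : ZMod n)) c d =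
      ∏ x ∈ Finset.range p, cr z (a + (x : ZMod n)) (a + (x : ZMod n) + 1) c d := by
  induction p with
  | zero =>
    have h := H 0 le_rfl
    simp only [Nat.cast_zero, add_zero] at h ⊢
    rw [Finset.prod_range_zero, cr, mul_comm (z a - z c) (z a - z d)]
    exact div_self (mul_ne_zero h.2 h.1)
  | succ p ih =>
    have hcast : ((p + 1 : ℕ) : ZMod n) = (p : ZMod n) + 1 := by push_cast; ring
    have h0 := H 0 (Nat.zero_le _)
    simp only [Nat.cast_zero, add_zero] at h0
    have hp := H p (Nat.le_succ p)
    have hp1 := H (p + 1) le_rfl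
    rw [hcast, ← add_assoc] at hp1
    rw [Finset.prod_range_succ, ← ih (fun x hx => H x (hx.trans (Nat.le_succ p))),
      hcast, ← add_assoc]
    exact cr_split_left z (a + (p : ZMod n)) h0.1 hp1.2 hp.1 hp.2

/-- Key building block: a cross-ratio along two disjoint cyclic arcs is a product of
dihedral coordinates, hence a monomial. -/
lemma Mono_cr_arc (A C : ZMod n) (p r : ℕ)
    (H : ∀ x ≤ p, ∀ y ≤ r, A + (x : ZMod n) ≠ C + (y : ZMod n)) :
    Mono n (fun z => cr z A (A + (p : ZMod n)) C (C + (r : ZMod n))) := by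
  have hchord : ∀ x < p, ∀ y < r, s(A + (x : ZMod n), C + (y : ZMod n)) ∈ chords n := by
    intro x hx y hy
    refine mem_chords_of ?_ ?_ ?_
    · intro h
      refine H x hx.le (y + 1) hy ?_
      have : C + ((y : ZMod n) + 1) = A + (x : ZMod n) := by rw [← sub_add_cancel (A + (x : ZMod n)) 1, ← h]; ring
      rw [← this]; push_cast; ring
    · exact (H x hx.le y hy.le).symm
    · intro h
      refine H (x + 1) hx y hy.le ?_
      rw [h]; push_cast; ring
  have key : ∀ z : ZMod n → ℝ, Function.Injective z →
      cr z A (A + (p : ZMod n)) C (C + (r : ZMod n)) =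
        ∏ x ∈ Finset.range p, ∏ y ∈ Finset.range r,
          u z s(A + (x : ZMod n), C + (y : ZMod n)) := by
    intro z hz
    rw [cr_telescope_left z A C (C + (r : ZMod n)) p (fun x hx => by
      constructor
      · exact sub_ne_zero.mpr (hz.ne (by simpa using H x hx 0 (Nat.zero_le _)))
      · exact sub_ne_zero.mpr (hz.ne (H x hx r le_rfl)))]
    refine Finset.prod_congr rfl fun x hx => ?_
    rw [Finset.mem_range] at hx
    rw [cr_telescope_right z (A + (x : ZMod n)) (A + (x : ZMod n) + 1) C r (fun y hy => by
      constructor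
      · exact sub_ne_zero.mpr (hz.ne (H x hx.le y hy))
      · refine sub_ne_zero.mpr (hz.ne ?_)
        have := H (x + 1) hx y hy
        intro hcontra
        refine this ?_
        rw [← hcontra]; push_cast; ring)]
    refine Finset.prod_congr rfl fun y hy => ?_
    rw [Finset.mem_range] at hy
    rw [u_mk]
  refine Mono_congr key (Mono_prod _ _ fun x hx => Mono_prod _ _ fun y hy => ?_)
  rw [Finset.mem_range] at hx hy
  exact Mono_u (hchord x hx y hy)

/-! #### Arithmetic helpers -/

lemma zcast_ne {s t : ℕ} (hs : s ≤ n) (ht0 : 0 < t) (htn : t < n) (hst : s ≠ t) :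
    (s : ZMod n) ≠ (t : ZMod n) := by
  intro h
  rcases eq_or_lt_of_le hs with rfl | hsn
  · rw [ZMod.natCast_self] at h
    have := ZMod.val_cast_of_lt htn
    rw [← h, ZMod.val_zero] at this
    omega
  · have h1 := ZMod.val_cast_of_lt hsn
    have h2 := ZMod.val_cast_of_lt htn
    rw [h, h2] at h1
    omega

lemma add_cast_ne (A : ZMod n) {s t : ℕ} (hs : s ≤ n) (ht0 : 0 < t) (htn : t < n)
    (hst : s ≠ t) : A + (s : ZMod n) ≠ A + (t : ZMod n) :=
  fun h => zcast_ne hs ht0 htn hst (by exact add_left_cancel h)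

end Aux

section Main

variable {n : ℕ} [NeZero n]

/-- The crossing case: `(C-A).val < (B-A).val < (D-A).val`. -/
lemma Mono_cr_cross (A B C D : ZMod n)
    (hAB : A ≠ B) (hAC : A ≠ C) (hAD : A ≠ D) (hBC : B ≠ C) (hBD : B ≠ D) (hCD : C ≠ D)
    (hcb : (C - A).val < (B - A).val) (hbd : (B - A).val < (D - A).val) :
    Mono n (fun z => cr z A B C D) := by
  set b := (B - A).val with hbdef
  set c := (C - A).val with hcdef
  set d := (D - A).val with hddef
  have hB : A + (b : ZMod n) = B := by
    rw [hbdef, ZMod.natCast_rightInverse (B - A)]; ring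
  have hC : A + (c : ZMod n) = C := by
    rw [hcdef, ZMod.natCast_rightInverse (C - A)]; ring
  have hD : A + (d : ZMod n) = D := by
    rw [hddef, ZMod.natCast_rightInverse (D - A)]; ring
  have hbn : b < n := ZMod.val_lt _
  have hcn : c < n := ZMod.val_lt _
  have hdn : d < n := ZMod.val_lt _
  have hc0 : 0 < c := Nat.pos_of_ne_zero fun h =>
    hAC (sub_eq_zero.mp ((ZMod.val_eq_zero _).mp h)).symm
  -- first factor: cr z A C B D
  have hD1 : B + ((d - b : ℕ) : ZMod n) = D := by
    rw [← hB, ← hD, Nat.cast_sub hbd.le]; push_cast; ring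
  have arc1 : Mono n (fun z => cr z A C B D) := by
    have := Mono_cr_arc A B c (d - b) (fun x hx y hy => by
      have e2 : B + (y : ZMod n) = A + ((b + y : ℕ) : ZMod n) := by
        rw [← hB]; push_cast; ring
      rw [e2]
      exact add_cast_ne A (by omega) (by omega) (by omega) (by omega))
    rwa [hC, hD1] at this
  -- second factor: cr z C B D A
  have hB2 : C + ((b - c : ℕ) : ZMod n) = B := by
    rw [← hC, ← hB, Nat.cast_sub hcb.le]; push_cast; ring
  have hA2 : D + ((n - d : ℕ) : ZMod n) = A := by
    rw [← hD, Nat.cast_sub hdn.le, ZMod.natCast_self]; push_cast; ring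
  have arc2 : Mono n (fun z => cr z C B D A) := by
    have := Mono_cr_arc C D (b - c) (n - d) (fun x hx y hy => by
      have e1 : C + (x : ZMod n) = A + ((c + x : ℕ) : ZMod n) := by
        rw [← hC]; push_cast; ring
      have e2 : D + (y : ZMod n) = A + ((d + y : ℕ) : ZMod n) := by
        rw [← hD]; push_cast; ring
      rw [e1, e2]
      exact (add_cast_ne A (by omega) (by omega) (by omega) (by omega)).symm)
    rwa [hB2, hA2] at this
  refine Mono_congr (fun z hz => ?_) (Mono_neg (Mono_mul arc1 (Mono_inv arc2)))
  show cr z A B C D = -(cr z A C B D * (cr z C B D A)⁻¹)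
  rw [cr_swap_snd z C B A D]
  exact cr_cross z (sub_ne_zero.mpr (hz.ne hAC)) (sub_ne_zero.mpr (hz.ne hBD))
    (sub_ne_zero.mpr (hz.ne hAB)) (sub_ne_zero.mpr (hz.ne hCD))

/-- Any cross-ratio on four pairwise distinct marked points is a signed monomial. -/
lemma Mono_cr (A B C D : ZMod n)
    (hAB : A ≠ B) (hAC : A ≠ C) (hAD : A ≠ D) (hBC : B ≠ C) (hBD : B ≠ D) (hCD : C ≠ D) :
    Mono n (fun z => cr z A B C D) := by
  set b := (B - A).val with hbdef
  set c := (C - A).val with hcdef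
  set d := (D - A).val with hddef
  have hB : A + (b : ZMod n) = B := by
    rw [hbdef, ZMod.natCast_rightInverse (B - A)]; ring
  have hC : A + (c : ZMod n) = C := by
    rw [hcdef, ZMod.natCast_rightInverse (C - A)]; ring
  have hD : A + (d : ZMod n) = D := by
    rw [hddef, ZMod.natCast_rightInverse (D - A)]; ring
  have hbn : b < n := ZMod.val_lt _
  have hcn : c < n := ZMod.val_lt _
  have hdn : d < n := ZMod.val_lt _
  have hb0 : 0 < b := Nat.pos_of_ne_zero fun h =>
    hAB (sub_eq_zero.mp ((ZMod.val_eq_zero _).mp h)).symm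
  have hc0 : 0 < c := Nat.pos_of_ne_zero fun h =>
    hAC (sub_eq_zero.mp ((ZMod.val_eq_zero _).mp h)).symm
  have hd0 : 0 < d := Nat.pos_of_ne_zero fun h =>
    hAD (sub_eq_zero.mp ((ZMod.val_eq_zero _).mp h)).symm
  have valne : ∀ X Y : ZMod n, X ≠ Y → (X - A).val ≠ (Y - A).val := by
    intro X Y hXY h
    have h2 := congrArg (Nat.cast (R := ZMod n)) h
    rw [ZMod.natCast_rightInverse, ZMod.natCast_rightInverse] at h2
    exact hXY (sub_left_inj.mp h2)
  have hbc : b ≠ c := valne B C hBC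
  have hbd : b ≠ d := valne B D hBD
  have hcd : c ≠ d := valne C D hCD
  rcases lt_or_gt_of_ne hbc with h1 | h1
  · -- b < c
    rcases lt_or_gt_of_ne hcd with h2 | h2
    · -- case 1 : b < c < d
      have hD1 : C + ((d - c : ℕ) : ZMod n) = D := by
        rw [← hC, ← hD, Nat.cast_sub h2.le]; push_cast; ring
      have := Mono_cr_arc A C b (d - c) (fun x hx y hy => by
        have e2 : C + (y : ZMod n) = A + ((c + y : ℕ) : ZMod n) := by
          rw [← hC]; push_cast; ring
        rw [e2]
        exact add_cast_ne A (by omega) (by omega) (by omega) (by omega))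
      rwa [hB, hD1] at this
    · rcases lt_or_gt_of_ne hbd with h3 | h3
      · -- case 4 : b < d < c
        have hC1 : D + ((c - d : ℕ) : ZMod n) = C := by
          rw [← hD, ← hC, Nat.cast_sub h2.le]; push_cast; ring
        have hmain := Mono_cr_arc A D b (c - d) (fun x hx y hy => by
          have e2 : D + (y : ZMod n) = A + ((d + y : ℕ) : ZMod n) := by
            rw [← hD]; push_cast; ring
          rw [e2]
          exact add_cast_ne A (by omega) (by omega) (by omega) (by omega))
        rw [hB, hC1] at hmain
        exact Mono_congr (fun z hz => (cr_swap_snd z A B C D).symm) (Mono_inv hmain)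
      · -- case 6 : d < b < c
        exact Mono_congr (fun z hz => (cr_swap_snd z A B C D).symm)
          (Mono_inv (Mono_cr_cross A B D C hAB hAD hAC hBD hBC (Ne.symm hCD) h3 h1))
  · -- c < b
    rcases lt_or_gt_of_ne hbd with h3 | h3
    · -- case 5 : c < b < d
      exact Mono_cr_cross A B C D hAB hAC hAD hBC hBD hCD h1 h3
    · rcases lt_or_gt_of_ne hcd with h2 | h2
      · -- case 2 : c < d < b
        have hA2 : B + ((n - b : ℕ) : ZMod n) = A := by
          rw [← hB, Nat.cast_sub hbn.le, ZMod.natCast_self]; push_cast; ring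
        have hD1 : C + ((d - c : ℕ) : ZMod n) = D := by
          rw [← hC, ← hD, Nat.cast_sub h2.le]; push_cast; ring
        have hmain := Mono_cr_arc B C (n - b) (d - c) (fun x hx y hy => by
          have e1 : B + (x : ZMod n) = A + ((b + x : ℕ) : ZMod n) := by
            rw [← hB]; push_cast; ring
          have e2 : C + (y : ZMod n) = A + ((c + y : ℕ) : ZMod n) := by
            rw [← hC]; push_cast; ring
          rw [e1, e2]
          exact add_cast_ne A (by omega) (by omega) (by omega) (by omega))
        rw [hA2, hD1] at hmain
        exact Mono_congr (fun z hz => (cr_swap_fst z A B C D).symm) (Mono_inv hmain)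
      · -- case 3 : d < c < b
        have hA2 : B + ((n - b : ℕ) : ZMod n) = A := by
          rw [← hB, Nat.cast_sub hbn.le, ZMod.natCast_self]; push_cast; ring
        have hC1 : D + ((c - d : ℕ) : ZMod n) = C := by
          rw [← hD, ← hC, Nat.cast_sub h2.le]; push_cast; ring
        have hmain := Mono_cr_arc B D (n - b) (c - d) (fun x hx y hy => by
          have e1 : B + (x : ZMod n) = A + ((b + x : ℕ) : ZMod n) := by
            rw [← hB]; push_cast; ring
          have e2 : D + (y : ZMod n) = A + ((d + y : ℕ) : ZMod n) := by
            rw [← hD]; push_cast; ring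
          rw [e1, e2]
          exact add_cast_ne A (by omega) (by omega) (by omega) (by omega))
        rw [hA2, hC1] at hmain
        exact Mono_congr (fun z hz => (cr_rev z A B C D).symm) hmain

end Main

/-- For `n ≥ 4`, any permutation `α` of `ZMod n` and any chord `{i,j}`,
the dihedral coordinate of the relabeled configuration is, identically on the real
configuration space, a signed Laurent monomial in the standard dihedral coordinates. -/
theorem relabeled_u_is_signed_monomial (n : ℕ) [NeZero n] (hn : 4 ≤ n)
    (α : Equiv.Perm (ZMod n)) (i j : ZMod n) (hij : s(i, j) ∈ chords n) :
    ∃ (ε : ℝ) (m : Sym2 (ZMod n) → ℤ), (ε = 1 ∨ ε = -1) ∧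
      ∀ z : ZMod n → ℝ, Function.Injective z →
        u (fun k => z (α k)) s(i, j) = ε * ∏ e ∈ chords n, u z e ^ m e := by
  obtain ⟨hc1, hc2, hc3⟩ := chord_conds hij
  have h1 : (1 : ZMod n) ≠ 0 := by
    haveI : Fact (1 < n) := ⟨by omega⟩
    exact one_ne_zero
  have hii : i ≠ i + 1 := fun h => h1 (by rwa [left_eq_add] at h)
  have hjj : j ≠ j + 1 := fun h => h1 (by rwa [left_eq_add] at h)
  obtain ⟨hij', hij1, hi1j, hi1j1⟩ := chord_pairwise_ne hij
  obtain ⟨ε, m, hε, hm⟩ := Mono_cr (α i) (α (i + 1)) (α j) (α (j + 1))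
    (α.injective.ne hii) (α.injective.ne hij') (α.injective.ne hij1)
    (α.injective.ne hi1j) (α.injective.ne hi1j1) (α.injective.ne hjj)
  refine ⟨ε, m, hε, fun z hz => ?_⟩
  rw [← hm z hz]
  rfl

end M0n
end

section
/- Let n ≥ 4 be an integer and let z : ZMod n → ℝ satisfy z(0) < z(1) < ⋯ < z(n−1), where the indices are the canonical representatives 0, 1, …, n−1 of ZMod n (in particular z is injective). Then 0 < u_e(z) < 1 for every chord e ∈ E. -/
namespace M0n

private lemma aux {n : ℕ} [NeZero n] (hn : 4 ≤ n) (z : ZMod n → ℝ)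
    (hmono : ∀ i j : ZMod n, i.val < j.val → z i < z j)
    (i j : ZMod n) (h1 : j ≠ i - 1) (h3 : j ≠ i + 1) (hij : i.val < j.val) :
    0 < u z s(i, j) ∧ u z s(i, j) < 1 := by
  haveI : Fact (1 < n) := ⟨by omega⟩
  have hone : (1 : ZMod n).val = 1 := ZMod.val_one n
  have hjlt : j.val < n := ZMod.val_lt j
  have hi1 : (i + 1).val = i.val + 1 := by
    have h := ZMod.val_add_of_lt (a := i) (b := 1) (by rw [hone]; omega)
    rwa [hone] at h
  have hij1 : i.val + 1 < j.val := by
    rcases Nat.lt_or_ge (i.val + 1) j.val with h | h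
    · exact h
    · exact absurd (ZMod.val_injective n (by omega : j.val = (i + 1).val)) h3
  have hu : u z s(i, j) =
      ((z i - z (j + 1)) * (z (i + 1) - z j)) / ((z i - z j) * (z (i + 1) - z (j + 1))) := rfl
  have sB : z i < z j := hmono _ _ hij
  have sC : z (i + 1) < z j := hmono _ _ (by omega)
  have sii : z i < z (i + 1) := hmono _ _ (by omega)
  rcases Nat.lt_or_ge (j.val + 1) n with hcase | hcase
  · -- no wraparound
    have hj1 : (j + 1).val = j.val + 1 := by
      have h := ZMod.val_add_of_lt (a := j) (b := 1) (by rw [hone]; omega)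
      rwa [hone] at h
    have sA : z i < z (j + 1) := hmono _ _ (by omega)
    have sD : z (i + 1) < z (j + 1) := hmono _ _ (by omega)
    have sjj : z j < z (j + 1) := hmono _ _ (by omega)
    have hbd : 0 < (z i - z j) * (z (i + 1) - z (j + 1)) :=
      mul_pos_of_neg_of_neg (by linarith) (by linarith)
    rw [hu]
    constructor
    · exact div_pos (mul_pos_of_neg_of_neg (by linarith) (by linarith)) hbd
    · rw [div_lt_one hbd]
      nlinarith [mul_pos (sub_pos.2 sii) (sub_pos.2 sjj)]
  · -- wraparound: j + 1 = 0
    have hj0 : j + 1 = 0 := by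
      have h : (j + 1).val = 0 := by
        rw [ZMod.val_add, hone]
        have hjn : j.val + 1 = n := by omega
        rw [hjn, Nat.mod_self]
      exact (ZMod.val_eq_zero _).1 h
    have hjneg : j = -1 := eq_neg_of_add_eq_zero_left hj0
    have hi0 : i ≠ 0 := by
      intro h
      exact h1 (by rw [h, hjneg]; ring)
    have hi0v : 0 < i.val :=
      Nat.pos_of_ne_zero fun h => hi0 ((ZMod.val_eq_zero _).1 h)
    have hz0 : (0 : ZMod n).val = 0 := ZMod.val_zero
    have sA : z 0 < z i := hmono _ _ (by omega)
    have sD : z 0 < z (i + 1) := hmono _ _ (by omega)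
    have sj0 : z 0 < z j := hmono _ _ (by omega)
    rw [hu, hj0]
    have hbd : (z i - z j) * (z (i + 1) - z 0) < 0 :=
      mul_neg_of_neg_of_pos (by linarith) (by linarith)
    constructor
    · exact div_pos_of_neg_of_neg
        (mul_neg_of_pos_of_neg (by linarith) (by linarith)) hbd
    · rw [div_lt_iff_of_neg hbd]
      nlinarith [mul_pos (sub_pos.2 sii) (sub_pos.2 sj0)]

/-- For `n ≥ 4` and `z : ZMod n → ℝ` with
`z 0 < z 1 < ⋯ < z (n-1)` (indices ordered by canonical representatives),
every dihedral coordinate satisfies `0 < u_e(z) < 1`. -/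
theorem increasing_config_u_in_unit_interval (n : ℕ) [NeZero n] (hn : 4 ≤ n)
    (z : ZMod n → ℝ) (hmono : ∀ i j : ZMod n, i.val < j.val → z i < z j) :
    ∀ e ∈ chords n, 0 < u z e ∧ u z e < 1 := by
  intro e he
  induction e using Sym2.ind with
  | _ i j =>
    obtain ⟨h1, h2, h3⟩ := (Finset.mem_filter.mp he).2 i j rfl
    rcases lt_trichotomy i.val j.val with h | h | h
    · exact aux hn z hmono i j h1 h3 h
    · exact absurd (ZMod.val_injective n h).symm h2
    · rw [Sym2.eq_swap]
      refine aux hn z hmono j i ?_ ?_ h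
      · intro hh; exact h3 (by rw [hh]; ring)
      · intro hh; exact h1 (by rw [hh]; ring)

end M0n
end

section
/- Let n ≥ 4 be an integer, let z, z' : ZMod n → ℝ be injective, and let σ, σ' be the (unique) permutations of ZMod n such that k ↦ z(σ(k)) and k ↦ z'(σ'(k)) are strictly increasing as the index k runs through the canonical representatives 0, 1, …, n−1 of ZMod n. Then sign(u_e(z)) = sign(u_e(z')) for every chord e ∈ E if and only if σ⁻¹ ∘ σ' belongs to the dihedral subgroup D of Perm(ZMod n) generated by the rotation x ↦ x + 1 and the reflection x ↦ −x. (Thus realizable sign patterns are in bijection with the (n−1)!/2 dihedral orderings of the n labels.) -/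
set_option maxHeartbeats 1000000


namespace M0n

section aux
variable {n : ℕ} [NeZero n]



lemma val_sub_eq (u v : ZMod n) :
    (u - v).val = if v.val ≤ u.val then u.val - v.val else u.val + n - v.val := by
  have h1 : ((u - v) + v).val = ((u-v).val + v.val) % n := ZMod.val_add _ _
  rw [sub_add_cancel] at h1
  have h2 : (u - v).val < n := ZMod.val_lt _
  have h3 : v.val < n := ZMod.val_lt _
  have h4 : u.val < n := ZMod.val_lt _
  rcases Nat.lt_or_ge ((u-v).val + v.val) n with h | h
  · rw [Nat.mod_eq_of_lt h] at h1; split_ifs <;> omega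
  · rw [Nat.mod_eq_sub_mod h, Nat.mod_eq_of_lt (by omega)] at h1; split_ifs <;> omega

omit [NeZero n] in
lemma val_pos_of_ne {a b : ZMod n} (h : a ≠ b) : 0 < (a - b).val :=
  ZMod.val_pos.2 (sub_ne_zero.2 h)

lemma eq_of_val_sub_eq {a b c : ZMod n} (h : (a - c).val = (b - c).val) : a = b := by
  have h2 : a - c = b - c := ZMod.val_injective n h
  simpa using congrArg (· + c) h2

lemma vne {a b c : ZMod n} (h : a ≠ b) : (a - c).val ≠ (b - c).val :=
  fun hv => h (eq_of_val_sub_eq hv)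

omit [NeZero n] in
/-- endpoints are not in the open arc -/
lemma not_cycBtw_self_left (a b : ZMod n) : ¬ CycBtw a a b := by
  simp [CycBtw]

omit [NeZero n] in
lemma not_cycBtw_self_right (a b : ZMod n) : ¬ CycBtw a b b := by
  simp [CycBtw]

lemma not_cycBtw_iff {a b x : ZMod n} (hab : a ≠ b) (hxa : x ≠ a) (hxb : x ≠ b) :
    ¬ CycBtw a x b ↔ CycBtw b x a := by
  have e1 : x - b = (x - a) - (b - a) := by ring
  have e2 : a - b = (0 : ZMod n) - (b - a) := by ring
  have h1 := val_pos_of_ne hxa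
  have h2 := val_pos_of_ne hab.symm
  have h3 := vne hxb (c := a)
  have h4 : (x - a).val < n := ZMod.val_lt _
  have h5 : (b - a).val < n := ZMod.val_lt _
  unfold CycBtw
  rw [e1, e2, val_sub_eq (x-a) (b-a), val_sub_eq 0 (b-a)]
  simp only [ZMod.val_zero]
  split_ifs <;> omega

/-- reflection through any `c` reverses arcs -/
lemma cycBtw_reflect {a b x : ZMod n} (c : ZMod n) (hab : a ≠ b) (hxa : x ≠ a) (hxb : x ≠ b) :
    CycBtw (c - a) (c - x) (c - b) ↔ CycBtw b x a := by
  have e1 : (c - x) - (c - a) = (a - x) := by ring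
  have e2 : (c - b) - (c - a) = (a - b) := by ring
  have e3 : a - x = (0:ZMod n) - (x - a) := by ring
  have e4 : a - b = (0:ZMod n) - (b - a) := by ring
  have e5 : x - b = (x - a) - (b - a) := by ring
  have h1 := val_pos_of_ne hxa
  have h2 := val_pos_of_ne hab.symm
  have h3 := vne hxb (c := a)
  have h4 : (x - a).val < n := ZMod.val_lt _
  have h5 : (b - a).val < n := ZMod.val_lt _
  unfold CycBtw
  rw [e1, e2, e3, e4, e5, val_sub_eq 0 (x-a), val_sub_eq 0 (b-a), val_sub_eq (x-a) (b-a)]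
  simp only [ZMod.val_zero]
  split_ifs <;> omega

omit [NeZero n] in
/-- translation invariance -/
lemma cycBtw_translate (a b x c : ZMod n) :
    CycBtw (c + a) (c + x) (c + b) ↔ CycBtw a x b := by
  have e1 : (c + x) - (c + a) = x - a := by ring
  have e2 : (c + b) - (c + a) = b - a := by ring
  unfold CycBtw; rw [e1, e2]

/-- seen from the far endpoint: `b ∈ arc(q → p)` iff `q ∈ arc(p → b)`-ish form -/
lemma cycBtw_far {p q b : ZMod n} (hqp : q ≠ p) (hbp : b ≠ p) (hbq : b ≠ q) :
    CycBtw q b p ↔ (q - p).val < (b - p).val := by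
  have e1 : b - q = (b - p) - (q - p) := by ring
  have e2 : p - q = (0:ZMod n) - (q - p) := by ring
  have h1 := val_pos_of_ne hqp
  have h2 := val_pos_of_ne hbp
  have h3 := vne hbq (c := p)
  have h4 : (q - p).val < n := ZMod.val_lt _
  have h5 : (b - p).val < n := ZMod.val_lt _
  unfold CycBtw
  rw [e1, e2, val_sub_eq 0 (q-p), val_sub_eq (b-p) (q-p)]
  simp only [ZMod.val_zero]
  split_ifs <;> omega

/-- bridge between cyclic and linear betweenness -/
lemma cycBtw_linear {a b x : ZMod n} (hab : a ≠ b) (hxa : x ≠ a) (hxb : x ≠ b) :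
    CycBtw a x b ↔ ((a.val < b.val ∧ a.val < x.val ∧ x.val < b.val) ∨
      (b.val < a.val ∧ (x.val < b.val ∨ a.val < x.val))) := by
  have h3 : a.val ≠ b.val := fun h => hab (ZMod.val_injective n h)
  have h1 : x.val ≠ a.val := fun h => hxa (ZMod.val_injective n h)
  have h2 : x.val ≠ b.val := fun h => hxb (ZMod.val_injective n h)
  have h4 : a.val < n := ZMod.val_lt _
  have h5 : b.val < n := ZMod.val_lt _
  have h6 : x.val < n := ZMod.val_lt _
  unfold CycBtw
  rw [val_sub_eq x a, val_sub_eq b a]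
  split_ifs <;> omega


/-- the natural number cast of `val` is the identity -/
lemma cast_val (a : ZMod n) : ((a.val : ℕ) : ZMod n) = a := ZMod.natCast_rightInverse a

/-- `Fp π j l` : `π l` lies in the open arc from `π j` to `π (j+1)`. -/
def Fp (π : Equiv.Perm (ZMod n)) (j l : ZMod n) : Prop :=
  CycBtw (π j) (π l) (π (j + 1))

/-- `SepC π i j` : the chords `{π i, π (i+1)}` and `{π j, π (j+1)}` cross. -/
def SepC (π : Equiv.Perm (ZMod n)) (i j : ZMod n) : Prop :=
  Xor' (Fp π i j) (Fp π i (j + 1))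

section chain
variable (hn : 4 ≤ n)
include hn

lemma val_one' : (1 : ZMod n).val = 1 := by rw [ZMod.val_one_eq_one_mod]; exact Nat.mod_eq_of_lt (by omega)

lemma val_two' : (2 : ZMod n).val = 2 := by
  have h : ((2:ℕ) : ZMod n) = (2 : ZMod n) := by norm_cast
  rw [← h, ZMod.val_cast_of_lt (by omega)]

lemma one_ne_zero' : (1 : ZMod n) ≠ 0 := by
  intro h; have := congrArg ZMod.val h; rw [val_one' hn, ZMod.val_zero] at this; exact one_ne_zero this

lemma two_ne_zero' : (2 : ZMod n) ≠ 0 := by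
  intro h; have := congrArg ZMod.val h; rw [val_two' hn, ZMod.val_zero] at this; omega

/-- every point distinct from `j` and `j+1` has the form `j + 2 + t` -/
lemma rep_point (j x : ZMod n) (h1 : x ≠ j) (h2 : x ≠ j + 1) :
    ∃ t : ℕ, t + 2 ≤ n - 1 ∧ x = j + 2 + (t : ZMod n) := by
  have hne : x - j ≠ 0 := sub_ne_zero.2 h1
  have hne1 : (x - j).val ≠ 1 := by
    intro h
    apply h2
    have : x - j = 1 := by
      apply ZMod.val_injective n; rw [h, val_one' hn]
    have := congrArg (· + j) this
    simpa [add_comm] using this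
  have hge : 2 ≤ (x - j).val := by
    have := ZMod.val_pos.2 hne; omega
  have hlt : (x - j).val < n := ZMod.val_lt _
  refine ⟨(x - j).val - 2, by omega, ?_⟩
  have : ((x - j).val - 2 : ℕ) = ((x - j) - 2).val := by
    rw [val_sub_eq (x - j) 2, val_two' hn]
    split_ifs <;> omega
  rw [this, cast_val]
  ring

variable {π π' : Equiv.Perm (ZMod n)}
variable (Hyp : ∀ i j : ZMod n, j ≠ i - 1 → j ≠ i → j ≠ i + 1 → (SepC π i j ↔ SepC π' i j))
include Hyp

lemma chain_step (j x : ZMod n) (h1 : x ≠ j - 1) (h2 : x ≠ j) (h3 : x ≠ j + 1) :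
    ((Fp π j x ↔ Fp π' j x) ↔ (Fp π j (x+1) ↔ Fp π' j (x+1))) := by
  have h := Hyp j x h1 h2 h3
  unfold SepC Xor' Xor at h
  tauto

lemma chain (j : ZMod n) {l m : ZMod n}
    (hl1 : l ≠ j) (hl2 : l ≠ j + 1) (hm1 : m ≠ j) (hm2 : m ≠ j + 1)
    (h : Fp π j l ↔ Fp π' j l) : Fp π j m ↔ Fp π' j m := by
  have main : ∀ t : ℕ, t + 2 ≤ n - 1 →
      ((Fp π j (j + 2) ↔ Fp π' j (j + 2)) ↔
        (Fp π j (j + 2 + (t : ZMod n)) ↔ Fp π' j (j + 2 + (t : ZMod n)))) := by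
    intro t
    induction t with
    | zero => simp
    | succ s ih =>
      intro ht
      have hs : s + 2 ≤ n - 1 := by omega
      rw [ih hs]
      have hcast : ∀ m : ℕ, m < n → (((m : ℕ)) : ZMod n).val = m := fun m h => ZMod.val_cast_of_lt h
      have hnn : 0 < n := by omega
      have e : j + 2 + ((s+1 : ℕ) : ZMod n) = (j + 2 + (s : ℕ)) + 1 := by push_cast; ring
      rw [e]
      apply chain_step hn Hyp
      · intro h
        have := congrArg (· - j) h
        have e2 : j + 2 + (s:ℕ) - j = ((s + 2 : ℕ) : ZMod n) := by push_cast; ring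
        have e3 : j - 1 - j = (0:ZMod n) - 1 := by ring
        rw [e2, e3] at this
        have := congrArg ZMod.val this
        rw [hcast _ (by omega), val_sub_eq, ZMod.val_zero, val_one' hn] at this
        split_ifs at this <;> omega
      · intro h
        have := congrArg (· - j) h
        have e2 : j + 2 + (s:ℕ) - j = ((s + 2 : ℕ) : ZMod n) := by push_cast; ring
        have e3 : j - j = (0:ZMod n) := by ring
        rw [e2, e3] at this
        have := congrArg ZMod.val this
        rw [hcast _ (by omega), ZMod.val_zero] at this
        omega
      · intro h
        have := congrArg (· - j) h
        have e2 : j + 2 + (s:ℕ) - j = ((s + 2 : ℕ) : ZMod n) := by push_cast; ring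
        have e3 : j + 1 - j = ((1:ℕ) : ZMod n) := by push_cast; ring
        rw [e2, e3] at this
        have := congrArg ZMod.val this
        rw [hcast _ (by omega), hcast _ (by omega)] at this
        omega
  obtain ⟨tl, htl, rfl⟩ := rep_point hn j l hl1 hl2
  obtain ⟨tm, htm, rfl⟩ := rep_point hn j m hm1 hm2
  rw [← main tm htm, main tl htl]
  exact h

end chain

section count
variable {n : ℕ} [NeZero n]
lemma card_arc (a b : ZMod n) :
    (Finset.univ.filter (fun x => CycBtw a x b)).card = (b - a).val - 1 := by
  have himg : Finset.univ.filter (fun x => CycBtw a x b)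
      = (Finset.Ioo 0 ((b - a).val)).image (fun t : ℕ => a + (t : ZMod n)) := by
    ext x
    simp only [Finset.mem_filter, Finset.mem_univ, true_and, Finset.mem_image, Finset.mem_Ioo]
    constructor
    · rintro ⟨h1, h2⟩
      exact ⟨(x - a).val, ⟨h1, h2⟩, by rw [cast_val]; ring⟩
    · rintro ⟨t, ⟨ht1, ht2⟩, rfl⟩
      have hv : ((t : ZMod n)).val = t :=
        ZMod.val_cast_of_lt (lt_of_lt_of_le ht2 (Nat.le_of_lt_succ (Nat.lt_succ_of_lt (ZMod.val_lt _))))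
      have he : a + (t:ZMod n) - a = (t : ZMod n) := by ring
      exact ⟨by rw [he, hv]; exact ht1, by rw [he, hv]; exact ht2⟩
  have hinj : Set.InjOn (fun t : ℕ => a + (t : ZMod n)) (Finset.Ioo 0 ((b - a).val)) := by
    intro s hs t ht hst
    simp only [Finset.coe_Ioo, Set.mem_Ioo] at hs ht
    have hlt : (b - a).val < n := ZMod.val_lt _
    have h2 : ((s : ZMod n)) = (t : ZMod n) := by
      have := congrArg (· - a) hst; simpa using this
    have := congrArg ZMod.val h2
    rwa [ZMod.val_cast_of_lt (by omega), ZMod.val_cast_of_lt (by omega)] at this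
  rw [himg, Finset.card_image_of_injOn hinj, Nat.card_Ioo]; omega

lemma card_perm_filter (π : Equiv.Perm (ZMod n)) (P : ZMod n → Prop) [DecidablePred P] :
    (Finset.univ.filter (fun l => P (π l))).card = (Finset.univ.filter P).card := by
  have himg : (Finset.univ.filter (fun l => P (π l))).image π = Finset.univ.filter P := by
    ext x
    simp only [Finset.mem_image, Finset.mem_filter, Finset.mem_univ, true_and]
    constructor
    · rintro ⟨l, hl, rfl⟩; exact hl
    · intro hx; exact ⟨π.symm x, by simpa using hx, by simp⟩
  rw [← himg, Finset.card_image_of_injective _ π.injective]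


/-- counting: if arcs pick out the same index sets, the arc lengths agree -/
lemma count_eq {π π' : Equiv.Perm (ZMod n)} {a b a' b' : ZMod n} (j : ZMod n)
    (ha : π j = a) (hb : π (j+1) = b)
    (hend1 : ¬ CycBtw a' (π' j) b') (hend2 : ¬ CycBtw a' (π' (j+1)) b')
    (hE : ∀ l : ZMod n, l ≠ j → l ≠ j + 1 → (CycBtw a (π l) b ↔ CycBtw a' (π' l) b')) :
    (b - a).val - 1 = (b' - a').val - 1 := by
  have hall : ∀ l : ZMod n, CycBtw a (π l) b ↔ CycBtw a' (π' l) b' := by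
    intro l
    by_cases h1 : l = j
    · subst h1; rw [ha]; simp [not_cycBtw_self_left, hend1]
    by_cases h2 : l = j + 1
    · subst h2; rw [hb]; simp [not_cycBtw_self_right, hend2]
    exact hE l h1 h2
  have : (Finset.univ.filter (fun l => CycBtw a (π l) b)).card
      = (Finset.univ.filter (fun l => CycBtw a' (π' l) b')).card := by
    congr 1; ext l; simp [hall l]
  have e1 := (card_perm_filter π (fun x => CycBtw a x b)).trans (card_arc a b)
  have e2 := (card_perm_filter π' (fun x => CycBtw a' x b')).trans (card_arc a' b')
  rw [e1, e2] at this
  exact this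

end count

section closure
variable {n : ℕ} [NeZero n]
/-- the dihedral generating set -/
def dgens (n : ℕ) : Set (Equiv.Perm (ZMod n)) :=
  {Equiv.addLeft (1 : ZMod n), Equiv.neg (ZMod n)}

/-- invariance of the crossing relation -/
def SepOK (g : Equiv.Perm (ZMod n)) : Prop :=
  ∀ a b c d : ZMod n, a ≠ b → c ≠ a → c ≠ b → d ≠ a → d ≠ b →
    (Xor' (CycBtw (g a) (g c) (g b)) (CycBtw (g a) (g d) (g b)) ↔
      Xor' (CycBtw a c b) (CycBtw a d b))

lemma sepOK_of_mem_closure {g : Equiv.Perm (ZMod n)}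
    (hg : g ∈ Subgroup.closure (dgens n)) : SepOK g := by
  induction hg using Subgroup.closure_induction with
  | mem x hx =>
    rcases hx with h | h
    · subst h
      intro a b c d hab hca hcb hda hdb
      simp only [Equiv.coe_addLeft]
      rw [cycBtw_translate, cycBtw_translate]
    · subst h
      intro a b c d hab hca hcb hda hdb
      simp only [Equiv.neg_apply]
      have e : ∀ x : ZMod n, -x = 0 - x := fun x => by ring
      rw [e a, e b, e c, e d,
        cycBtw_reflect 0 hab hca hcb, cycBtw_reflect 0 hab hda hdb,
        ← not_cycBtw_iff hab hca hcb, ← not_cycBtw_iff hab hda hdb]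
      unfold Xor' Xor; tauto
  | one =>
    intro a b c d hab hca hcb hda hdb
    simp only [Equiv.Perm.coe_one, id_eq]
  | mul x y hx hy ihx ihy =>
    intro a b c d hab hca hcb hda hdb
    have h1 := ihx (y a) (y b) (y c) (y d) (fun h => hab (y.injective h))
      (fun h => hca (y.injective h)) (fun h => hcb (y.injective h))
      (fun h => hda (y.injective h)) (fun h => hdb (y.injective h))
    have h2 := ihy a b c d hab hca hcb hda hdb
    simpa [Equiv.Perm.mul_apply] using h1.trans h2
  | inv x hx ihx =>
    intro a b c d hab hca hcb hda hdb
    have h1 := ihx (x⁻¹ a) (x⁻¹ b) (x⁻¹ c) (x⁻¹ d) (fun h => hab (x⁻¹.injective h))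
      (fun h => hca (x⁻¹.injective h)) (fun h => hcb (x⁻¹.injective h))
      (fun h => hda (x⁻¹.injective h)) (fun h => hdb (x⁻¹.injective h))
    simp only [Equiv.Perm.coe_inv, Equiv.apply_symm_apply] at h1
    exact h1.symm

lemma addLeft_natCast_mem (m : ℕ) :
    Equiv.addLeft ((m : ℕ) : ZMod n) ∈ Subgroup.closure (dgens n) := by
  induction m with
  | zero =>
    have : Equiv.addLeft ((0:ℕ) : ZMod n) = 1 := by
      ext x; simp
    rw [this]; exact one_mem _
  | succ k ih =>
    have : Equiv.addLeft (((k+1:ℕ)) : ZMod n)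
        = Equiv.addLeft (1 : ZMod n) * Equiv.addLeft ((k : ℕ) : ZMod n) := by
      ext x; simp [Equiv.Perm.mul_apply]; push_cast; ring
    rw [this]
    exact mul_mem (Subgroup.subset_closure (Or.inl rfl)) ih

lemma addLeft_mem (c : ZMod n) : Equiv.addLeft c ∈ Subgroup.closure (dgens n) := by
  have := addLeft_natCast_mem (n := n) c.val
  rwa [ZMod.natCast_rightInverse c] at this

lemma neg_mem' : Equiv.neg (ZMod n) ∈ Subgroup.closure (dgens n) :=
  Subgroup.subset_closure (Or.inr rfl)

end closure

section core
variable {n : ℕ} [NeZero n]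

lemma cast_ne_zero' {m : ℕ} (h1 : 0 < m) (h2 : m < n) : ((m : ℕ) : ZMod n) ≠ 0 := by
  intro h
  have := congrArg ZMod.val h
  rw [ZMod.val_cast_of_lt h2, ZMod.val_zero] at this
  omega

theorem core (hn : 4 ≤ n) (π π' : Equiv.Perm (ZMod n))
    (Hyp : ∀ i j : ZMod n, j ≠ i - 1 → j ≠ i → j ≠ i + 1 → (SepC π i j ↔ SepC π' i j)) :
    π * π'⁻¹ ∈ Subgroup.closure (dgens n) := by
  have h10 : (1 : ZMod n) ≠ 0 := one_ne_zero' hn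
  have h20 : (2 : ZMod n) ≠ 0 := two_ne_zero' hn
  have hsub1 : ∀ x : ZMod n, x - 1 ≠ x := fun x h => by
    apply h10; have := congrArg (x - ·) h; simpa using this
  have hadd1 : ∀ x : ZMod n, x + 1 ≠ x := fun x h => by
    apply h10; have := congrArg (· - x) h; simpa using this
  have hadd2 : ∀ x : ZMod n, x + 1 ≠ x - 1 := fun x h => by
    apply h20
    have : (x + 1) - (x - 1) = 2 := by ring
    rw [h] at this; simpa using this.symm
  have h01 : (0 : ZMod n) ≠ 1 := fun h => h10 h.symm
  have h21 : (2 : ZMod n) ≠ 1 := fun h => h10 (by linear_combination h)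
  -- ### Step A : find g ∈ D matching positions 0 and 1, with edge-0 agreement
  obtain ⟨g, hgmem, hgH⟩ :
      ∃ g ∈ Subgroup.closure (dgens n),
        (g * π) 0 = π' 0 ∧ (g * π) 1 = π' 1 ∧
        ∀ l : ZMod n, l ≠ 0 → l ≠ 1 → (Fp (g * π) 0 l ↔ Fp π' 0 l) := by
    have hd01 : π 0 ≠ π 1 := fun h => h01 (π.injective h)
    have hd01' : π' 0 ≠ π' 1 := fun h => h01 (π'.injective h)
    by_cases hb : Fp π 0 2 ↔ Fp π' 0 2
    · -- rotation case
      have hall : ∀ l : ZMod n, l ≠ 0 → l ≠ 1 → (Fp π 0 l ↔ Fp π' 0 l) := by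
        intro l hl0 hl1
        refine chain hn Hyp 0 h20 (by rwa [zero_add]) hl0 (by rwa [zero_add]) hb
      have hcnt := count_eq (π := π) (π' := π') (a := π 0) (b := π 1)
        (a' := π' 0) (b' := π' 1) 0 rfl (by rw [zero_add])
        (not_cycBtw_self_left _ _) (by rw [zero_add]; exact not_cycBtw_self_right _ _)
        (by intro l h1 h2
            have := hall l h1 (by rwa [zero_add] at h2)
            unfold Fp at this; rwa [zero_add] at this)
      have hd : π 1 - π 0 = π' 1 - π' 0 := by
        apply ZMod.val_injective
        have p1 := val_pos_of_ne hd01.symm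
        have p2 := val_pos_of_ne hd01'.symm
        omega
      refine ⟨Equiv.addLeft (π' 0 - π 0), addLeft_mem _, ?_, ?_, ?_⟩
      · simp [Equiv.Perm.mul_apply]
      · simp only [Equiv.Perm.mul_apply, Equiv.coe_addLeft]
        linear_combination hd
      · intro l hl0 hl1
        have : Fp (Equiv.addLeft (π' 0 - π 0) * π) 0 l ↔ Fp π 0 l := by
          unfold Fp
          simp only [Equiv.Perm.mul_apply, Equiv.coe_addLeft]
          exact cycBtw_translate _ _ _ _
        rw [this]; exact hall l hl0 hl1
    · -- reflection case
      have hnall : ∀ l : ZMod n, l ≠ 0 → l ≠ 1 → (Fp π 0 l ↔ ¬ Fp π' 0 l) := by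
        intro l hl0 hl1
        have : ¬ (Fp π 0 l ↔ Fp π' 0 l) := by
          intro h
          exact hb (chain hn Hyp 0 hl0 (by rwa [zero_add]) h20 (by rwa [zero_add]) h)
        tauto
      have hrev : ∀ l : ZMod n, l ≠ 0 → l ≠ 1 →
          (Fp π 0 l ↔ CycBtw (π' 1) (π' l) (π' 0)) := by
        intro l hl0 hl1
        rw [hnall l hl0 hl1]
        unfold Fp
        rw [zero_add]
        exact not_cycBtw_iff hd01' (fun h => hl0 (π'.injective h)) (fun h => hl1 (π'.injective h))
      have hcnt := count_eq (π := π) (π' := π') (a := π 0) (b := π 1)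
        (a' := π' 1) (b' := π' 0) 0 rfl (by rw [zero_add])
        (not_cycBtw_self_right _ _) (by rw [zero_add]; exact not_cycBtw_self_left _ _)
        (by intro l h1 h2
            have := hrev l h1 (by rwa [zero_add] at h2)
            unfold Fp at this; rwa [zero_add] at this)
      have hd : π 1 - π 0 = π' 0 - π' 1 := by
        apply ZMod.val_injective
        have p1 := val_pos_of_ne hd01.symm
        have p2 := val_pos_of_ne hd01'
        omega
      refine ⟨Equiv.addLeft (π' 0 + π 0) * Equiv.neg (ZMod n),
        mul_mem (addLeft_mem _) neg_mem', ?_, ?_, ?_⟩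
      · simp only [Equiv.Perm.mul_apply, Equiv.coe_addLeft, Equiv.neg_apply]
        ring
      · simp only [Equiv.Perm.mul_apply, Equiv.coe_addLeft, Equiv.neg_apply]
        linear_combination -hd
      · intro l hl0 hl1
        have hx1 : π l ≠ π 0 := fun h => hl0 (π.injective h)
        have hx2 : π l ≠ π 1 := fun h => hl1 (π.injective h)
        have e : ∀ x : ZMod n, π' 0 + π 0 + (-x) = (π' 0 + π 0) - x := fun x => by ring
        have : Fp (Equiv.addLeft (π' 0 + π 0) * Equiv.neg (ZMod n) * π) 0 l
            ↔ CycBtw (π 1) (π l) (π 0) := by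
          unfold Fp
          simp only [Equiv.Perm.mul_apply, Equiv.coe_addLeft, Equiv.neg_apply]
          rw [e, e, e, zero_add]
          exact cycBtw_reflect _ hd01 hx1 hx2
        rw [this, ← not_cycBtw_iff hd01 hx1 hx2]
        have h5 := hnall l hl0 hl1
        unfold Fp at h5 ⊢
        rw [zero_add] at h5 ⊢
        tauto
  obtain ⟨hg0, hg1, hgE⟩ := hgH
  set τ : Equiv.Perm (ZMod n) := g * π with hτ
  -- ### crossing data transfers to τ
  have HypT : ∀ i j : ZMod n, j ≠ i - 1 → j ≠ i → j ≠ i + 1 → (SepC τ i j ↔ SepC π' i j) := by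
    intro i j h1 h2 h3
    have hab : π i ≠ π (i + 1) := fun h => hadd1 i (π.injective h).symm
    have hca : π j ≠ π i := fun h => h2 (π.injective h)
    have hcb : π j ≠ π (i + 1) := fun h => h3 (π.injective h)
    have hda : π (j + 1) ≠ π i := fun h => by
      apply h1
      have := π.injective h
      rw [← this]; ring
    have hdb : π (j + 1) ≠ π (i + 1) := fun h => h2 (by
      have := π.injective h
      have := congrArg (· - 1) this
      simpa using this)
    have hOK := sepOK_of_mem_closure hgmem (π i) (π (i + 1)) (π j) (π (j + 1))
      hab hca hcb hda hdb
    have h4 := Hyp i j h1 h2 h3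
    unfold SepC Fp at h4 ⊢
    rw [hτ]
    simp only [Equiv.Perm.mul_apply]
    exact hOK.trans h4
  -- ### main induction : τ agrees with π' everywhere
  have key : ∀ m : ℕ, m < n → τ ((m : ℕ) : ZMod n) = π' ((m : ℕ) : ZMod n) := by
    intro m
    induction m using Nat.strong_induction_on with
    | _ m IH =>
      intro hm
      match m, hm with
      | 0, hm => simpa using hg0
      | 1, hm => simpa using hg1
      | (k+2), hm =>
        have hk1n : k + 1 < n := by omega
        have hkn : k < n := by omega
        set j : ZMod n := ((k+1 : ℕ) : ZMod n) with hj
        have hjk : (↑(k : ℕ) : ZMod n) = j - 1 := by rw [hj]; push_cast; ring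
        have hjk2 : (↑(k+2 : ℕ) : ZMod n) = j + 1 := by rw [hj]; push_cast; ring
        have e0 : τ j = π' j := IH (k+1) (by omega) hk1n
        have e1 : τ (j - 1) = π' (j - 1) := by rw [← hjk]; exact IH k (by omega) hkn
        -- h_{k-1} ≡ true
        have hk1 : ∀ l : ZMod n, l ≠ j - 1 → l ≠ j → (Fp τ (j - 1) l ↔ Fp π' (j - 1) l) := by
          have hsab : (j - 1) + 1 = j := by ring
          rcases Nat.eq_zero_or_pos k with hk0 | hkpos
          · subst hk0
            have hj1 : j = 1 := by rw [hj]; push_cast; ring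
            have hj0 : j - 1 = 0 := by rw [hj1]; ring
            intro l hl1 hl2
            rw [hj0] at hl1 ⊢
            rw [hj1] at hl2
            have h5 := hgE l hl1 hl2
            unfold Fp at h5 ⊢
            rw [zero_add] at h5 ⊢
            exact h5
          · -- use the common point 0
            have hbase : Fp τ (j - 1) 0 ↔ Fp π' (j - 1) 0 := by
              unfold Fp
              rw [hsab, e0, e1, (by simpa using hg0 : τ 0 = π' 0)]
            intro l hl1 hl2
            have h0a : (0 : ZMod n) ≠ j - 1 := by
              rw [← hjk]
              intro h
              exact cast_ne_zero' hkpos hkn h.symm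
            have h0b : (0 : ZMod n) ≠ j := by
              rw [hj]
              intro h
              exact cast_ne_zero' (by omega) hk1n h.symm
            exact chain hn HypT (j - 1) h0a (by rw [hsab]; exact h0b) hl1
              (by rw [hsab]; exact hl2) hbase
        rw [hjk2]
        have hsab : (j - 1) + 1 = j := by ring
        by_cases hc : Fp τ j (j - 1) ↔ Fp π' j (j - 1)
        · -- counting argument: the two gaps agree, so the next points agree
          have hall : ∀ l : ZMod n, l ≠ j → l ≠ j + 1 → (Fp τ j l ↔ Fp π' j l) :=
            fun l hl1 hl2 =>
              chain hn HypT j (hsub1 j) (Ne.symm (hadd2 j)) hl1 hl2 hc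
          have hcnt := count_eq (π := τ) (π' := π') (a := τ j) (b := τ (j+1))
            (a' := π' j) (b' := π' (j+1)) j rfl rfl
            (not_cycBtw_self_left _ _) (not_cycBtw_self_right _ _)
            (fun l h1 h2 => hall l h1 h2)
          have p1 : 0 < (τ (j+1) - τ j).val :=
            val_pos_of_ne (fun h => hadd1 j (τ.injective h))
          have p2 : 0 < (π' (j+1) - π' j).val :=
            val_pos_of_ne (fun h => hadd1 j (π'.injective h))
          have hval : (τ (j+1) - τ j).val = (π' (j+1) - π' j).val := by omega
          rw [e0] at hval
          exact eq_of_val_sub_eq hval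
        · -- the two local pictures contradict each other
          exfalso
          have hqp : τ (j - 1) ≠ τ j := fun h => hsub1 j (τ.injective h)
          have hbp : τ (j+1) ≠ τ j := fun h => hadd1 j (τ.injective h)
          have hbq : τ (j+1) ≠ τ (j-1) := fun h => hadd2 j (τ.injective h)
          have hqp' : π' (j - 1) ≠ π' j := fun h => hsub1 j (π'.injective h)
          have hbp' : π' (j+1) ≠ π' j := fun h => hadd1 j (π'.injective h)
          have hbq' : π' (j+1) ≠ π' (j-1) := fun h => hadd2 j (π'.injective h)
          have fpadj : ∀ ρ : Equiv.Perm (ZMod n), ρ (j-1) ≠ ρ j →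
              (Fp ρ j (j-1) ↔ (ρ (j-1) - ρ j).val < (ρ (j+1) - ρ j).val) :=
            fun ρ hq => and_iff_right (val_pos_of_ne hq)
          have h2 := hk1 (j+1) (hadd2 j) (hadd1 j)
          unfold Fp at h2
          rw [hsab, cycBtw_far hqp hbp hbq, cycBtw_far hqp' hbp' hbq'] at h2
          apply hc
          rw [fpadj τ hqp, fpadj π' hqp', e0, e1]
          rw [e0, e1] at h2
          exact h2
  -- ### conclusion
  have hτπ : τ = π' := Equiv.ext fun x => by
    have hx := key x.val (ZMod.val_lt x)
    rwa [cast_val] at hx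
  rw [hτ] at hτπ
  have hfin : π * π'⁻¹ = g⁻¹ := by rw [← hτπ]; group
  rw [hfin]
  exact inv_mem hgmem

end core


lemma sign_eq_sign_iff {a b : ℝ} (ha : a ≠ 0) (hb : b ≠ 0) :
    Real.sign a = Real.sign b ↔ (a < 0 ↔ b < 0) := by
  rcases ha.lt_or_gt with h1 | h1 <;> rcases hb.lt_or_gt with h2 | h2 <;>
    simp [Real.sign_of_neg, Real.sign_of_pos, h1, h2, not_lt.2 h1.le, not_lt.2 h2.le] <;>
    norm_num

lemma quad_sign {P Q R S : ℝ} (hP : P ≠ 0) (hQ : Q ≠ 0) (hR : R ≠ 0) (hS : S ≠ 0) :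
    ((P * Q) / (R * S) < 0 ↔ ¬(((P < 0) ↔ (Q < 0)) ↔ ((R < 0) ↔ (S < 0)))) := by
  rcases hP.lt_or_gt with h1 | h1 <;> rcases hQ.lt_or_gt with h2 | h2 <;>
    rcases hR.lt_or_gt with h3 | h3 <;> rcases hS.lt_or_gt with h4 | h4 <;>
    first
      | exact iff_of_true (div_neg_of_neg_of_pos (by nlinarith) (by nlinarith))
          (by simp [h1, h2, h3, h4, asymm h1, asymm h2, asymm h3, asymm h4])
      | exact iff_of_true (div_neg_of_pos_of_neg (by nlinarith) (by nlinarith))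
          (by simp [h1, h2, h3, h4, asymm h1, asymm h2, asymm h3, asymm h4])
      | exact iff_of_false (not_lt.2 (div_pos (by nlinarith) (by nlinarith)).le)
          (by simp [h1, h2, h3, h4, asymm h1, asymm h2, asymm h3, asymm h4])
      | exact iff_of_false (not_lt.2 (div_pos_of_neg_of_neg (by nlinarith) (by nlinarith)).le)
          (by simp [h1, h2, h3, h4, asymm h1, asymm h2, asymm h3, asymm h4])

lemma sorted_lt {z : ZMod n → ℝ} {σ : Equiv.Perm (ZMod n)}
    (hσ : ∀ i j : ZMod n, i.val < j.val → z (σ i) < z (σ j)) (x y : ZMod n) :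
    z x < z y ↔ (σ⁻¹ x).val < (σ⁻¹ y).val := by
  constructor
  · intro h
    rcases lt_trichotomy ((σ⁻¹ x).val) ((σ⁻¹ y).val) with hv | hv | hv
    · exact hv
    · exfalso
      have : σ⁻¹ x = σ⁻¹ y := ZMod.val_injective n hv
      have : x = y := (Equiv.injective σ⁻¹) this
      rw [this] at h; exact lt_irrefl _ h
    · exfalso
      have := hσ _ _ hv
      simp only [Equiv.Perm.coe_inv, Equiv.apply_symm_apply] at this
      exact absurd h (asymm this)
  · intro hv
    have := hσ _ _ hv
    simpa only [Equiv.Perm.coe_inv, Equiv.apply_symm_apply] using this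

lemma u_sign (hn : 4 ≤ n) (z : ZMod n → ℝ) (hz : Function.Injective z)
    (σ : Equiv.Perm (ZMod n)) (hσ : ∀ i j : ZMod n, i.val < j.val → z (σ i) < z (σ j))
    (i j : ZMod n) (h1 : j ≠ i - 1) (h2 : j ≠ i) (h3 : j ≠ i + 1) :
    u z s(i, j) ≠ 0 ∧ (u z s(i, j) < 0 ↔ SepC σ⁻¹ i j) := by
  have h10 : (1 : ZMod n) ≠ 0 := one_ne_zero' hn
  have hij1 : i ≠ j + 1 := fun h => h1 (by rw [h]; ring)
  have hi1j : i + 1 ≠ j := fun h => h3 h.symm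
  have hij : i ≠ j := fun h => h2 h.symm
  have hii1 : i ≠ i + 1 := fun h => h10 (by linear_combination -h)
  have hjj1 : j ≠ j + 1 := fun h => h10 (by linear_combination -h)
  have hi1j1 : i + 1 ≠ j + 1 := fun h => hij (by linear_combination h)
  have hP : z i - z (j+1) ≠ 0 := sub_ne_zero.2 fun h => hij1 (hz h)
  have hQ : z (i+1) - z j ≠ 0 := sub_ne_zero.2 fun h => hi1j (hz h)
  have hR : z i - z j ≠ 0 := sub_ne_zero.2 fun h => hij (hz h)
  have hS : z (i+1) - z (j+1) ≠ 0 := sub_ne_zero.2 fun h => hi1j1 (hz h)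
  have hu : u z s(i, j)
      = ((z i - z (j + 1)) * (z (i + 1) - z j)) / ((z i - z j) * (z (i + 1) - z (j + 1))) := by
    simp [u]
  constructor
  · rw [hu]; exact div_ne_zero (mul_ne_zero hP hQ) (mul_ne_zero hR hS)
  rw [hu, quad_sign hP hQ hR hS]
  rw [sub_neg, sub_neg, sub_neg, sub_neg]
  rw [sorted_lt hσ i (j+1), sorted_lt hσ (i+1) j, sorted_lt hσ i j, sorted_lt hσ (i+1) (j+1)]
  -- distinctness of the inverse images
  have dab : σ⁻¹ i ≠ σ⁻¹ (i+1) := fun h => hii1 (Equiv.injective _ h)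
  have dca : σ⁻¹ j ≠ σ⁻¹ i := fun h => hij (Equiv.injective _ h).symm
  have dcb : σ⁻¹ j ≠ σ⁻¹ (i+1) := fun h => h3 (Equiv.injective _ h)
  have dda : σ⁻¹ (j+1) ≠ σ⁻¹ i := fun h => hij1 (Equiv.injective _ h).symm
  have ddb : σ⁻¹ (j+1) ≠ σ⁻¹ (i+1) := fun h => hi1j1 (Equiv.injective _ h).symm
  unfold SepC Fp
  rw [cycBtw_linear dab dca dcb, cycBtw_linear dab dda ddb]
  have vab : (σ⁻¹ i).val ≠ (σ⁻¹ (i+1)).val := fun h => dab (ZMod.val_injective n h)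
  have vca : (σ⁻¹ j).val ≠ (σ⁻¹ i).val := fun h => dca (ZMod.val_injective n h)
  have vcb : (σ⁻¹ j).val ≠ (σ⁻¹ (i+1)).val := fun h => dcb (ZMod.val_injective n h)
  have vda : (σ⁻¹ (j+1)).val ≠ (σ⁻¹ i).val := fun h => dda (ZMod.val_injective n h)
  have vdb : (σ⁻¹ (j+1)).val ≠ (σ⁻¹ (i+1)).val := fun h => ddb (ZMod.val_injective n h)
  unfold Xor' Xor
  omega


end aux

/-- For `n ≥ 4` and injective `z, z' : ZMod n → ℝ`, sorted by
permutations `σ, σ'`, all dihedral coordinates of `z` and `z'` have equal signs iff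
`σ⁻¹ ∘ σ'` lies in the dihedral subgroup generated by `x ↦ x + 1` and `x ↦ -x`. -/
theorem same_signs_iff_dihedral (n : ℕ) [NeZero n] (hn : 4 ≤ n) (z z' : ZMod n → ℝ)
    (hz : Function.Injective z) (hz' : Function.Injective z')
    (σ σ' : Equiv.Perm (ZMod n))
    (hσ : ∀ i j : ZMod n, i.val < j.val → z (σ i) < z (σ j))
    (hσ' : ∀ i j : ZMod n, i.val < j.val → z' (σ' i) < z' (σ' j)) :
    (∀ e ∈ chords n, Real.sign (u z e) = Real.sign (u z' e)) ↔
      σ⁻¹ * σ' ∈ Subgroup.closure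
        ({Equiv.addLeft (1 : ZMod n), Equiv.neg (ZMod n)} : Set (Equiv.Perm (ZMod n))) := by
  have hsets : ({Equiv.addLeft (1 : ZMod n), Equiv.neg (ZMod n)} : Set (Equiv.Perm (ZMod n)))
      = dgens n := rfl
  rw [hsets]
  constructor
  · intro hsigns
    have Hyp : ∀ i j : ZMod n, j ≠ i - 1 → j ≠ i → j ≠ i + 1 →
        (SepC σ⁻¹ i j ↔ SepC σ'⁻¹ i j) := by
      intro i j h1 h2 h3
      have hme : s(i, j) ∈ chords n := by
        rw [chords, Finset.mem_filter]
        refine ⟨Finset.mem_univ _, ?_⟩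
        intro i' j' h
        rcases Sym2.eq_iff.1 h with ⟨hi, hj⟩ | ⟨hi, hj⟩
        · subst hi; subst hj; exact ⟨h1, h2, h3⟩
        · subst hi; subst hj
          refine ⟨fun h => h3 (by rw [h]; ring), fun h => h2 h.symm,
            fun h => h1 (by rw [h]; ring)⟩
      have hse := hsigns _ hme
      have A := u_sign hn z hz σ hσ i j h1 h2 h3
      have B := u_sign hn z' hz' σ' hσ' i j h1 h2 h3
      rw [sign_eq_sign_iff A.1 B.1] at hse
      rw [← A.2, ← B.2]
      exact hse
    have hcore := core hn σ⁻¹ σ'⁻¹ Hyp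
    simpa using hcore
  · intro hmem e he
    induction e using Sym2.ind with
    | _ i j =>
      have hch : IsChord n s(i, j) := (Finset.mem_filter.1 he).2
      obtain ⟨h1, h2, h3⟩ := hch i j rfl
      have h10 : (1 : ZMod n) ≠ 0 := one_ne_zero' hn
      have hij1 : i ≠ j + 1 := fun h => h1 (by rw [h]; ring)
      have hi1j : i + 1 ≠ j := fun h => h3 h.symm
      have hij : i ≠ j := fun h => h2 h.symm
      have hii1 : i ≠ i + 1 := fun h => h10 (by linear_combination -h)
      have hi1j1 : i + 1 ≠ j + 1 := fun h => hij (by linear_combination h)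
      have A := u_sign hn z hz σ hσ i j h1 h2 h3
      have B := u_sign hn z' hz' σ' hσ' i j h1 h2 h3
      rw [sign_eq_sign_iff A.1 B.1, A.2, B.2]
      have hmem' : σ⁻¹ * σ' ∈ Subgroup.closure (dgens n) := hmem
      have hOK := sepOK_of_mem_closure hmem'
      have dab : σ'⁻¹ i ≠ σ'⁻¹ (i+1) := fun h => hii1 (Equiv.injective _ h)
      have dca : σ'⁻¹ j ≠ σ'⁻¹ i := fun h => h2 (Equiv.injective _ h)
      have dcb : σ'⁻¹ j ≠ σ'⁻¹ (i+1) := fun h => h3 (Equiv.injective _ h)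
      have dda : σ'⁻¹ (j+1) ≠ σ'⁻¹ i := fun h => hij1 ((Equiv.injective _ h).symm)
      have ddb : σ'⁻¹ (j+1) ≠ σ'⁻¹ (i+1) := fun h => hi1j1 ((Equiv.injective _ h).symm)
      have hx := hOK (σ'⁻¹ i) (σ'⁻¹ (i+1)) (σ'⁻¹ j) (σ'⁻¹ (j+1)) dab dca dcb dda ddb
      simp only [Equiv.Perm.mul_apply, Equiv.Perm.coe_inv, Equiv.apply_symm_apply] at hx
      unfold SepC Fp
      exact hx

end M0n
end

section
/- Let n and ℓ be integers with 3 ≤ ℓ ≤ n−2, and let z : ZMod n → ℝ be injective with u_{{0,ℓ}}(z) < 0 and u_e(z) > 0 for every chord e of length strictly less than ℓ. Set z' = z ∘ τ, where τ ∈ Perm(ZMod n) is the transposition exchanging 1 and ℓ. Then: u_{{0,ℓ}}(z') > 0, u_{{0,ℓ−1}}(z') > 0, u_{{1,ℓ}}(z') > 0; if ℓ ≥ 4 then u_{{1,ℓ−1}}(z') < 0; and for every integer j with 2 ≤ j ≤ ℓ−2: u_{{0,j}}(z') > 0, u_{{j,ℓ}}(z') > 0, u_{{1,j}}(z') > 0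 whenever j ≥ 3, and u_{{j,ℓ−1}}(z') > 0 whenever j ≤ ℓ−3. (This is the realized form of the paper's sign computation t(v_{n1}, v_{n ℓ−1}, v_{ℓ1}, v_{ℓ ℓ−1}) = (+,+,+,−) and t(v_{nj}, v_{ℓj}, v_{j ℓ−1}, v_{j1}) = (+,+,+,+).) -/
namespace M0n

private lemma natcast_ne (n : ℕ) [NeZero n] {x y : ℕ} (h1 : x < y) (h2 : y < x + n) :
    ((x:ℕ):ZMod n) ≠ (y:ZMod n) := by
  intro h
  have h3 : ((y - x : ℕ) : ZMod n) = 0 := by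
    rw [Nat.cast_sub h1.le, ← h, sub_self]
  have h4 : n ∣ y - x := (ZMod.natCast_eq_zero_iff _ _).mp h3
  have := Nat.le_of_dvd (by omega) h4
  omega

private lemma mem_chords' (n : ℕ) [NeZero n] {x y : ℕ} (h2 : x + 2 ≤ y) (hd : y + 2 ≤ x + n) :
    s((x:ZMod n), (y:ZMod n)) ∈ chords n := by
  have k1 : (y:ZMod n) ≠ (x:ZMod n) - 1 := by
    intro h
    refine natcast_ne n (show x < y + 1 by omega) (by omega) ?_
    push_cast
    rw [h]; ring
  have k2 : (y:ZMod n) ≠ (x:ZMod n) :=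
    fun h => natcast_ne n (show x < y by omega) (by omega) h.symm
  have k3 : (y:ZMod n) ≠ (x:ZMod n) + 1 := by
    intro h
    refine natcast_ne n (show x + 1 < y by omega) (by omega) ?_
    push_cast
    rw [h]
  have k4 : (x:ZMod n) ≠ (y:ZMod n) - 1 := by
    intro h
    refine natcast_ne n (show x + 1 < y by omega) (by omega) ?_
    push_cast
    rw [h]; ring
  have k6 : (x:ZMod n) ≠ (y:ZMod n) + 1 := by
    intro h
    refine natcast_ne n (show x < y + 1 by omega) (by omega) ?_
    push_cast
    exact h
  simp only [chords, Finset.mem_filter, Finset.mem_univ, true_and, IsChord]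
  intro i j hij
  rw [Sym2.eq_iff] at hij
  rcases hij with ⟨rfl, rfl⟩ | ⟨rfl, rfl⟩
  · exact ⟨k1, k2, k3⟩
  · exact ⟨k4, Ne.symm k2, k6⟩

private lemma u_natCast {n : ℕ} [NeZero n] (w : ZMod n → ℝ) (x y : ℕ) :
    u w s((x : ZMod n), (y : ZMod n)) =
      ((w (x:ZMod n) - w ((y+1 : ℕ):ZMod n)) * (w ((x+1:ℕ):ZMod n) - w (y:ZMod n))) /
        ((w (x:ZMod n) - w (y:ZMod n)) * (w ((x+1:ℕ):ZMod n) - w ((y+1:ℕ):ZMod n))) := by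
  have h1 : ((x+1:ℕ):ZMod n) = (x:ZMod n)+1 := by push_cast; ring
  have h2 : ((y+1:ℕ):ZMod n) = (y:ZMod n)+1 := by push_cast; ring
  rw [h1, h2]
  rfl

private lemma chordLength_natCast {n : ℕ} [NeZero n] {x y : ℕ} (h1 : x ≤ y) (h2 : y - x < n) :
    chordLength n s((x : ZMod n), (y : ZMod n)) ≤ y - x := by
  have h3 : ((y:ZMod n) - (x:ZMod n)) = ((y - x : ℕ) : ZMod n) := by
    rw [Nat.cast_sub h1]
  calc chordLength n s((x : ZMod n), (y : ZMod n)) ≤ ((y:ZMod n) - (x:ZMod n)).val :=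
        min_le_left _ _
    _ = y - x := by rw [h3, ZMod.val_natCast_of_lt h2]

private lemma sign_aux1 {T A : ℝ} (hA : A < 0) (k : T * (1 - A) = -A) : 0 < T := by
  have h1 : 0 < 1 - A := by linarith
  have h2 : T = (-A) / (1 - A) := by
    rw [eq_div_iff h1.ne']
    exact k
  rw [h2]
  exact div_pos (by linarith) h1

private lemma sign_aux2 {T E : ℝ} (hE : 0 < E) (hE1 : E < 1) (k : T * (1 - E) = -E) : T < 0 := by
  have h1 : 0 < 1 - E := by linarith
  have h2 : T = (-E) / (1 - E) := by
    rw [eq_div_iff h1.ne']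
    exact k
  rw [h2]
  exact div_neg_of_neg_of_pos (by linarith) h1

private lemma sign_aux3 {T P : ℝ} (hP : 0 < P) (k : T * P = 1) : 0 < T := by
  have h2 : T = 1 / P := by
    rw [eq_div_iff hP.ne']
    exact k
  rw [h2]
  exact one_div_pos.mpr hP
set_option maxHeartbeats 4000000 in
set_option linter.all false in
/-- Sign computation for the swap of the labels `1` and `ℓ`, for an
injective `z : ZMod n → ℝ` whose shortest negative chord is `{0, ℓ}`. -/
theorem signs_after_swap_one_ell (n ℓ : ℕ) [NeZero n] (hl3 : 3 ≤ ℓ) (hln : ℓ ≤ n - 2)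
    (z : ZMod n → ℝ) (hz : Function.Injective z)
    (hneg : u z s((0 : ZMod n), (ℓ : ZMod n)) < 0)
    (hshort : ∀ e ∈ chords n, chordLength n e < ℓ → 0 < u z e) :
    ∀ z' : ZMod n → ℝ, z' = (fun k => z (Equiv.swap (1 : ZMod n) (ℓ : ZMod n) k)) →
      (0 < u z' s((0 : ZMod n), (ℓ : ZMod n))) ∧
      (0 < u z' s((0 : ZMod n), (ℓ : ZMod n) - 1)) ∧
      (0 < u z' s((1 : ZMod n), (ℓ : ZMod n))) ∧
      (4 ≤ ℓ → u z' s((1 : ZMod n), (ℓ : ZMod n) - 1) < 0) ∧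
      (∀ j : ℕ, 2 ≤ j → j ≤ ℓ - 2 →
        0 < u z' s((0 : ZMod n), (j : ZMod n)) ∧
        0 < u z' s((j : ZMod n), (ℓ : ZMod n)) ∧
        (3 ≤ j → 0 < u z' s((1 : ZMod n), (j : ZMod n))) ∧
        (j ≤ ℓ - 3 → 0 < u z' s((j : ZMod n), (ℓ : ZMod n) - 1))) := by
  intro z' hz'
  have hn5 : 5 ≤ n := by omega
  obtain ⟨f, hf⟩ : ∃ f : ℕ → ℝ, ∀ k : ℕ, f k = z ((k:ℕ):ZMod n) :=
    ⟨fun k => z ((k:ℕ):ZMod n), fun _ => rfl⟩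
  have hne : ∀ x y : ℕ, x < y → y < x + n → f x ≠ f y := by
    intro x y a b h
    rw [hf, hf] at h
    exact natcast_ne n a b (hz h)
  have hd : ∀ x y : ℕ, x < y → y < x + n → f x - f y ≠ 0 :=
    fun x y a b => sub_ne_zero_of_ne (hne x y a b)
  have hd' : ∀ x y : ℕ, x < y → y < x + n → f y - f x ≠ 0 :=
    fun x y a b => sub_ne_zero_of_ne (hne x y a b).symm
  have hu : ∀ x y : ℕ, x + 2 ≤ y → y < x + ℓ →
      0 < ((f x - f (y+1)) * (f (x+1) - f y)) / ((f x - f y) * (f (x+1) - f (y+1))) := by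
    intro x y a b
    have hm := hshort _ (mem_chords' n a (by omega))
      (lt_of_le_of_lt (chordLength_natCast (by omega) (by omega)) (show y - x < ℓ by omega))
    rw [u_natCast] at hm
    simp only [← hf] at hm
    exact hm
  have hA : ((f 0 - f (ℓ+1)) * (f 1 - f ℓ)) / ((f 0 - f ℓ) * (f 1 - f (ℓ+1))) < 0 := by
    have t := hneg
    rw [show (0 : ZMod n) = ((0:ℕ) : ZMod n) by norm_num] at t
    rw [u_natCast] at t
    simp only [← hf] at t
    norm_num at t
    exact t
  have Frow : ∀ a c : ℕ, a + 2 ≤ c → ∀ d : ℕ, c ≤ d → d ≤ a + ℓ →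
      0 < ((f a - f d) * (f (a+1) - f c)) / ((f a - f c) * (f (a+1) - f d)) := by
    intro a c h2 d hcd
    induction d, hcd using Nat.le_induction with
    | base =>
      intro _
      rw [div_self (mul_ne_zero (hd a c (by omega) (by omega)) (hd (a+1) c (by omega) (by omega)))]
      norm_num
    | succ d hcd ih =>
      intro h3
      have hp := ih (by omega)
      have hq := hu a d (by omega) (by omega)
      have n1 := hd a c (by omega) (by omega)
      have n2 := hd a d (by omega) (by omega)
      have n3 := hd a (d+1) (by omega) (by omega)
      have n4 := hd (a+1) c (by omega) (by omega)
      have n5 := hd (a+1) d (by omega) (by omega)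
      have n6 := hd (a+1) (d+1) (by omega) (by omega)
      have key : ((f a - f (d+1)) * (f (a+1) - f c)) / ((f a - f c) * (f (a+1) - f (d+1)))
          = (((f a - f d) * (f (a+1) - f c)) / ((f a - f c) * (f (a+1) - f d)))
            * (((f a - f (d+1)) * (f (a+1) - f d)) / ((f a - f d) * (f (a+1) - f (d+1)))) := by
        field_simp
      rw [key]
      exact mul_pos hp hq
  have Fcol : ∀ a c d : ℕ, a + 1 ≤ c → c ≤ d → d ≤ a + ℓ → ∀ b : ℕ, a ≤ b → b < c →
      0 < ((f a - f d) * (f b - f c)) / ((f a - f c) * (f b - f d)) := by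
    intro a c d hac hcd h3 b hab
    induction b, hab using Nat.le_induction with
    | base =>
      intro _
      rw [mul_comm (f a - f d) (f a - f c),
        div_self (mul_ne_zero (hd a c (by omega) (by omega)) (hd a d (by omega) (by omega)))]
      norm_num
    | succ b hab ih =>
      intro hbc
      have hp := ih (by omega)
      have hq := Frow b c (by omega) d hcd (by omega)
      have n1 := hd a c (by omega) (by omega)
      have n2 := hd a d (by omega) (by omega)
      have n3 := hd b c (by omega) (by omega)
      have n4 := hd b d (by omega) (by omega)
      have n5 := hd (b+1) c (by omega) (by omega)
      have n6 := hd (b+1) d (by omega) (by omega)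
      have key : ((f a - f d) * (f (b+1) - f c)) / ((f a - f c) * (f (b+1) - f d))
          = (((f a - f d) * (f b - f c)) / ((f a - f c) * (f b - f d)))
            * (((f b - f d) * (f (b+1) - f c)) / ((f b - f c) * (f (b+1) - f d))) := by
        field_simp
      rw [key]
      exact mul_pos hp hq
  have Fneg : ∀ b c : ℕ, 1 ≤ b → b < c → c ≤ ℓ →
      ((f 0 - f (ℓ+1)) * (f b - f c)) / ((f 0 - f c) * (f b - f (ℓ+1))) < 0 := by
    intro b c hb hbc hcl
    have t1 : 0 < ((f 1 - f (ℓ+1)) * (f b - f c)) / ((f 1 - f c) * (f b - f (ℓ+1))) :=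
      Fcol 1 c (ℓ+1) (by omega) (by omega) (by omega) b hb hbc
    have t2 : 0 < ((f 0 - f ℓ) * (f 1 - f c)) / ((f 0 - f c) * (f 1 - f ℓ)) :=
      Fcol 0 c ℓ (by omega) (by omega) (by omega) 1 (by omega) (by omega)
    have n1 := hd 0 c (by omega) (by omega)
    have n2 := hd 0 ℓ (by omega) (by omega)
    have n3 := hd 1 c (by omega) (by omega)
    have n4 := hd 1 ℓ (by omega) (by omega)
    have n5 := hd 1 (ℓ+1) (by omega) (by omega)
    have n6 := hd b (ℓ+1) (by omega) (by omega)
    have n7 := hd 0 (ℓ+1) (by omega) (by omega)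
    have key : ((f 0 - f (ℓ+1)) * (f b - f c)) / ((f 0 - f c) * (f b - f (ℓ+1)))
        = (((f 0 - f ℓ) * (f 1 - f c)) / ((f 0 - f c) * (f 1 - f ℓ)))
          * (((f 0 - f (ℓ+1)) * (f 1 - f ℓ)) / ((f 0 - f ℓ) * (f 1 - f (ℓ+1))))
          * (((f 1 - f (ℓ+1)) * (f b - f c)) / ((f 1 - f c) * (f b - f (ℓ+1)))) := by
      field_simp
    rw [key]
    exact mul_neg_of_neg_of_pos (mul_neg_of_pos_of_neg t2 hA) t1
  have hc1 : ((ℓ-1:ℕ):ZMod n) = (ℓ:ZMod n) - 1 := by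
    rw [Nat.cast_sub (show 1 ≤ ℓ by omega), Nat.cast_one]
  have hsw : ∀ k : ℕ, k ≠ 1 → k ≠ ℓ → k < n → z' ((k:ℕ):ZMod n) = f k := by
    intro k h1 h2 hk
    have e1 : ((k:ℕ):ZMod n) ≠ (1:ZMod n) := by
      rw [show (1:ZMod n) = ((1:ℕ):ZMod n) by norm_num]
      rcases Nat.lt_or_ge k 1 with h | h
      · exact natcast_ne n h (by omega)
      · exact (natcast_ne n (by omega) (by omega)).symm
    have e2 : ((k:ℕ):ZMod n) ≠ ((ℓ:ℕ):ZMod n) := by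
      rcases Nat.lt_or_ge k ℓ with h | h
      · exact natcast_ne n h (by omega)
      · exact (natcast_ne n (by omega) (by omega)).symm
    rw [hz']
    simp only [Equiv.swap_apply_of_ne_of_ne e1 e2]
    exact (hf k).symm
  have hv0 : z' ((0:ℕ):ZMod n) = f 0 := hsw 0 (by omega) (by omega) (by omega)
  have hv2 : z' ((2:ℕ):ZMod n) = f 2 := hsw 2 (by omega) (by omega) (by omega)
  have hvl1 : z' ((ℓ-1:ℕ):ZMod n) = f (ℓ-1) := hsw (ℓ-1) (by omega) (by omega) (by omega)
  have hvlp : z' ((ℓ+1:ℕ):ZMod n) = f (ℓ+1) := hsw (ℓ+1) (by omega) (by omega) (by omega)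
  have hv1 : z' ((1:ℕ):ZMod n) = f ℓ := by
    rw [hz', show ((1:ℕ):ZMod n) = (1:ZMod n) by norm_num]
    simp only [Equiv.swap_apply_left]
    exact (hf ℓ).symm
  have hvl : z' ((ℓ:ℕ):ZMod n) = f 1 := by
    rw [hz']
    simp only [Equiv.swap_apply_right]
    rw [show (1:ZMod n) = ((1:ℕ):ZMod n) by norm_num]
    exact (hf 1).symm
  have m01 := hd 0 1 (by omega) (by omega)
  have m01' := hd' 0 1 (by omega) (by omega)
  have m02 := hd 0 2 (by omega) (by omega)
  have m02' := hd' 0 2 (by omega) (by omega)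
  have m0l1 := hd 0 (ℓ-1) (by omega) (by omega)
  have m0l1' := hd' 0 (ℓ-1) (by omega) (by omega)
  have m0l := hd 0 ℓ (by omega) (by omega)
  have m0l' := hd' 0 ℓ (by omega) (by omega)
  have m0lp := hd 0 (ℓ+1) (by omega) (by omega)
  have m0lp' := hd' 0 (ℓ+1) (by omega) (by omega)
  have m12 := hd 1 2 (by omega) (by omega)
  have m12' := hd' 1 2 (by omega) (by omega)
  have m1l1 := hd 1 (ℓ-1) (by omega) (by omega)
  have m1l1' := hd' 1 (ℓ-1) (by omega) (by omega)
  have m1l := hd 1 ℓ (by omega) (by omega)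
  have m1l' := hd' 1 ℓ (by omega) (by omega)
  have m1lp := hd 1 (ℓ+1) (by omega) (by omega)
  have m1lp' := hd' 1 (ℓ+1) (by omega) (by omega)
  have m2l := hd 2 ℓ (by omega) (by omega)
  have m2l' := hd' 2 ℓ (by omega) (by omega)
  have m2lp := hd 2 (ℓ+1) (by omega) (by omega)
  have m2lp' := hd' 2 (ℓ+1) (by omega) (by omega)
  have ml1l := hd (ℓ-1) ℓ (by omega) (by omega)
  have ml1l' := hd' (ℓ-1) ℓ (by omega) (by omega)
  have ml1lp := hd (ℓ-1) (ℓ+1) (by omega) (by omega)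
  have ml1lp' := hd' (ℓ-1) (ℓ+1) (by omega) (by omega)
  have mllp := hd ℓ (ℓ+1) (by omega) (by omega)
  have mllp' := hd' ℓ (ℓ+1) (by omega) (by omega)
  refine ⟨?_, ?_, ?_, ?_, ?_⟩
  · -- u'_{0,ℓ} > 0
    rw [show (0 : ZMod n) = ((0:ℕ) : ZMod n) by norm_num, u_natCast]
    simp only [Nat.zero_add]
    rw [hv0, hv1, hvl, hvlp]
    refine sign_aux1 hA ?_
    field_simp [m01, m01', m0l, m0l', m0lp, m0lp', m1l, m1l', m1lp, m1lp', mllp, mllp']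
    ring
  · -- u'_{0,ℓ-1} > 0
    have hB := Fcol 1 ℓ (ℓ+1) (by omega) (by omega) (by omega) (ℓ-1) (by omega) (by omega)
    have hC := Fneg 1 (ℓ-1) (by omega) (by omega) (by omega)
    rw [show (0 : ZMod n) = ((0:ℕ) : ZMod n) by norm_num, ← hc1, u_natCast]
    simp only [Nat.zero_add, show ℓ-1+1 = ℓ from by omega]
    rw [hv0, hv1, hvl1, hvl]
    have k2 : ((f 0 - f 1) * (f ℓ - f (ℓ-1))) / ((f 0 - f (ℓ-1)) * (f ℓ - f 1))
        = (((f 1 - f (ℓ+1)) * (f (ℓ-1) - f ℓ)) / ((f 1 - f ℓ) * (f (ℓ-1) - f (ℓ+1))))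
          * (1 - ((f 0 - f (ℓ+1)) * (f 1 - f (ℓ-1))) / ((f 0 - f (ℓ-1)) * (f 1 - f (ℓ+1)))) := by
      field_simp [m01, m01', m0l1, m0l1', m0l, m0l', m0lp, m0lp', m1l1, m1l1',
        m1l, m1l', m1lp, m1lp', ml1l, ml1l', ml1lp, ml1lp', mllp, mllp']
      ring
    rw [k2]
    exact mul_pos hB (by linarith)
  · -- u'_{1,ℓ} > 0
    have hDD := Fneg 2 ℓ (by omega) (by omega) (by omega)
    have hE := Fcol 0 2 ℓ (by omega) (by omega) (by omega) 1 (by omega) (by omega)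
    rw [show (1 : ZMod n) = ((1:ℕ) : ZMod n) by norm_num, u_natCast]
    simp only [show (1:ℕ)+1 = 2 from rfl]
    rw [hv1, hv2, hvl, hvlp]
    have k3 : ((f ℓ - f (ℓ+1)) * (f 2 - f 1)) / ((f ℓ - f 1) * (f 2 - f (ℓ+1)))
        = (1 - ((f 0 - f (ℓ+1)) * (f 2 - f ℓ)) / ((f 0 - f ℓ) * (f 2 - f (ℓ+1))))
          * (((f 0 - f ℓ) * (f 1 - f 2)) / ((f 0 - f 2) * (f 1 - f ℓ))) := by
      field_simp [m01, m01', m02, m02', m0l, m0l', m0lp, m0lp', m12, m12',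
        m1l, m1l', m1lp, m1lp', m2l, m2l', m2lp, m2lp', mllp, mllp']
      ring
    rw [k3]
    exact mul_pos (by linarith) hE
  · -- ℓ ≥ 4 → u'_{1,ℓ-1} < 0
    intro hl4
    have m2l1 := hd 2 (ℓ-1) (by omega) (by omega)
    have m2l1' := hd' 2 (ℓ-1) (by omega) (by omega)
    have hE4 : 0 < ((f 1 - f ℓ) * (f 2 - f (ℓ-1))) / ((f 1 - f (ℓ-1)) * (f 2 - f ℓ)) := by
      have t := hu 1 (ℓ-1) (by omega) (by omega)
      rw [show ℓ-1+1 = ℓ from by omega] at t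
      simpa only [show (1:ℕ)+1 = 2 from rfl] using t
    have hG := Fcol 2 ℓ (ℓ+1) (by omega) (by omega) (by omega) (ℓ-1) (by omega) (by omega)
    have hH := Fneg 2 (ℓ-1) (by omega) (by omega) (by omega)
    have hI := Fcol 0 2 (ℓ-1) (by omega) (by omega) (by omega) 1 (by omega) (by omega)
    have k4a : 1 - ((f 1 - f ℓ) * (f 2 - f (ℓ-1))) / ((f 1 - f (ℓ-1)) * (f 2 - f ℓ))
        = (((f 2 - f (ℓ+1)) * (f (ℓ-1) - f ℓ)) / ((f 2 - f ℓ) * (f (ℓ-1) - f (ℓ+1))))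
          * (1 - ((f 0 - f (ℓ+1)) * (f 2 - f (ℓ-1))) / ((f 0 - f (ℓ-1)) * (f 2 - f (ℓ+1))))
          * (((f 0 - f (ℓ-1)) * (f 1 - f 2)) / ((f 0 - f 2) * (f 1 - f (ℓ-1)))) := by
      field_simp [m01, m01', m02, m02', m0l1, m0l1', m0l, m0l', m0lp, m0lp', m12, m12',
        m1l1, m1l1', m1l, m1l', m1lp, m1lp', m2l1, m2l1', m2l, m2l', m2lp, m2lp',
        ml1l, ml1l', ml1lp, ml1lp', mllp, mllp']
      ring
    have h0 : 0 < 1 - ((f 1 - f ℓ) * (f 2 - f (ℓ-1))) / ((f 1 - f (ℓ-1)) * (f 2 - f ℓ)) := by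
      rw [k4a]
      exact mul_pos (mul_pos hG (by linarith)) hI
    rw [← hc1, show (1 : ZMod n) = ((1:ℕ) : ZMod n) by norm_num, u_natCast]
    simp only [show (1:ℕ)+1 = 2 from rfl, show ℓ-1+1 = ℓ from by omega]
    rw [hv1, hv2, hvl1, hvl]
    refine sign_aux2 hE4 (by linarith) ?_
    field_simp [m01, m01', m02, m02', m0l1, m0l1', m0l, m0l', m12, m12',
      m1l1, m1l1', m1l, m1l', m2l1, m2l1', m2l, m2l', ml1l, ml1l']
    ring
  · -- the j part
    intro j hj2 hjl
    have hj2' : j + 2 ≤ ℓ := by omega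
    have hvj : z' ((j:ℕ):ZMod n) = f j := hsw j (by omega) (by omega) (by omega)
    have hvj1 : z' ((j+1:ℕ):ZMod n) = f (j+1) := hsw (j+1) (by omega) (by omega) (by omega)
    have m0j := hd 0 j (by omega) (by omega)
    have m0j' := hd' 0 j (by omega) (by omega)
    have m0j1 := hd 0 (j+1) (by omega) (by omega)
    have m0j1' := hd' 0 (j+1) (by omega) (by omega)
    have m1j := hd 1 j (by omega) (by omega)
    have m1j' := hd' 1 j (by omega) (by omega)
    have m1j1 := hd 1 (j+1) (by omega) (by omega)
    have m1j1' := hd' 1 (j+1) (by omega) (by omega)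
    have mjj1 := hd j (j+1) (by omega) (by omega)
    have mjj1' := hd' j (j+1) (by omega) (by omega)
    have mjl := hd j ℓ (by omega) (by omega)
    have mjl' := hd' j ℓ (by omega) (by omega)
    have mjlp := hd j (ℓ+1) (by omega) (by omega)
    have mjlp' := hd' j (ℓ+1) (by omega) (by omega)
    have mj1l := hd (j+1) ℓ (by omega) (by omega)
    have mj1l' := hd' (j+1) ℓ (by omega) (by omega)
    have mj1lp := hd (j+1) (ℓ+1) (by omega) (by omega)
    have mj1lp' := hd' (j+1) (ℓ+1) (by omega) (by omega)
    have hJ1 : 0 < ((f 0 - f (j+1)) * (f 1 - f j)) / ((f 0 - f j) * (f 1 - f (j+1))) := by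
      have t := hu 0 j (by omega) (by omega)
      simpa only [Nat.zero_add] using t
    have hJ2 := hu j ℓ (by omega) (by omega)
    have hJ3 := Fneg j (j+1) (by omega) (by omega) (by omega)
    refine ⟨?_, ?_, fun hj3 => ?_, fun hjl3 => ?_⟩
    · -- u'_{0,j} > 0
      rw [show (0 : ZMod n) = ((0:ℕ) : ZMod n) by norm_num, u_natCast]
      simp only [Nat.zero_add]
      rw [hv0, hv1, hvj, hvj1]
      refine sign_aux3 (mul_pos hJ2 (show 0 < 1 -
        ((f 0 - f (ℓ+1)) * (f j - f (j+1))) / ((f 0 - f (j+1)) * (f j - f (ℓ+1)))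
        by linarith)) ?_
      field_simp [m0j, m0j', m0j1, m0j1', m0l, m0l', m0lp, m0lp', mjj1, mjj1',
        mjl, mjl', mjlp, mjlp', mj1l, mj1l', mj1lp, mj1lp', mllp, mllp']
      ring
    · -- u'_{j,ℓ} > 0
      rw [u_natCast]
      rw [hvj, hvj1, hvl, hvlp]
      refine sign_aux3 (mul_pos hJ1 (show 0 < 1 -
        ((f 0 - f (ℓ+1)) * (f j - f (j+1))) / ((f 0 - f (j+1)) * (f j - f (ℓ+1)))
        by linarith)) ?_
      field_simp [m01, m01', m0j, m0j', m0j1, m0j1', m0lp, m0lp', m1j, m1j', m1j1, m1j1',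
        mjj1, mjj1', mjlp, mjlp', mj1lp, mj1lp', m1lp, m1lp']
      ring
    · -- j ≥ 3 → u'_{1,j} > 0
      have m2j := hd 2 j (by omega) (by omega)
      have m2j' := hd' 2 j (by omega) (by omega)
      have m2j1 := hd 2 (j+1) (by omega) (by omega)
      have m2j1' := hd' 2 (j+1) (by omega) (by omega)
      have hJ4 : 0 < ((f 1 - f (j+1)) * (f 2 - f j)) / ((f 1 - f j) * (f 2 - f (j+1))) := by
        have t := hu 1 j (by omega) (by omega)
        simpa only [show (1:ℕ)+1 = 2 from rfl] using t
      rw [show (1 : ZMod n) = ((1:ℕ) : ZMod n) by norm_num, u_natCast]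
      simp only [show (1:ℕ)+1 = 2 from rfl]
      rw [hv1, hv2, hvj, hvj1]
      have k7 : ((f ℓ - f (j+1)) * (f 2 - f j)) / ((f ℓ - f j) * (f 2 - f (j+1)))
          = (((f j - f (ℓ+1)) * (f (j+1) - f ℓ)) / ((f j - f ℓ) * (f (j+1) - f (ℓ+1))))
            * (1 - ((f 0 - f (ℓ+1)) * (f j - f (j+1))) / ((f 0 - f (j+1)) * (f j - f (ℓ+1))))
            * (((f 0 - f (j+1)) * (f 1 - f j)) / ((f 0 - f j) * (f 1 - f (j+1))))
            * (((f 1 - f (j+1)) * (f 2 - f j)) / ((f 1 - f j) * (f 2 - f (j+1)))) := by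
        field_simp [m01, m01', m02, m02', m0j, m0j', m0j1, m0j1', m0l, m0l', m0lp, m0lp',
          m12, m12', m1j, m1j', m1j1, m1j1', m1l, m1l', m1lp, m1lp', m2j, m2j', m2j1, m2j1',
          m2l, m2l', m2lp, m2lp', mjj1, mjj1', mjl, mjl', mjlp, mjlp', mj1l, mj1l',
          mj1lp, mj1lp', mllp, mllp']
        ring
      rw [k7]
      exact mul_pos (mul_pos (mul_pos hJ2 (by linarith)) hJ1) hJ4
    · -- j ≤ ℓ-3 → u'_{j,ℓ-1} > 0
      have mjl1 := hd j (ℓ-1) (by omega) (by omega)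
      have mjl1' := hd' j (ℓ-1) (by omega) (by omega)
      have mj1l1 := hd (j+1) (ℓ-1) (by omega) (by omega)
      have mj1l1' := hd' (j+1) (ℓ-1) (by omega) (by omega)
      have hJ5 : 0 < ((f j - f ℓ) * (f (j+1) - f (ℓ-1))) / ((f j - f (ℓ-1)) * (f (j+1) - f ℓ)) := by
        have t := hu j (ℓ-1) (by omega) (by omega)
        rwa [show ℓ-1+1 = ℓ from by omega] at t
      rw [← hc1, u_natCast]
      simp only [show ℓ-1+1 = ℓ from by omega]
      rw [hvj, hvj1, hvl1, hvl]
      have k8 : ((f j - f 1) * (f (j+1) - f (ℓ-1))) / ((f j - f (ℓ-1)) * (f (j+1) - f 1))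
          = (((f j - f ℓ) * (f (j+1) - f (ℓ-1))) / ((f j - f (ℓ-1)) * (f (j+1) - f ℓ)))
            * (((f j - f (ℓ+1)) * (f (j+1) - f ℓ)) / ((f j - f ℓ) * (f (j+1) - f (ℓ+1))))
            * (1 - ((f 0 - f (ℓ+1)) * (f j - f (j+1))) / ((f 0 - f (j+1)) * (f j - f (ℓ+1))))
            * (((f 0 - f (j+1)) * (f 1 - f j)) / ((f 0 - f j) * (f 1 - f (j+1)))) := by
        field_simp [m01, m01', m0j, m0j', m0j1, m0j1', m0l1, m0l1', m0l, m0l', m0lp, m0lp',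
          m1j, m1j', m1j1, m1j1', m1l1, m1l1', m1l, m1l', m1lp, m1lp',
          mjj1, mjj1', mjl1, mjl1', mjl, mjl', mjlp, mjlp', mj1l1, mj1l1', mj1l, mj1l',
          mj1lp, mj1lp', ml1l, ml1l', ml1lp, ml1lp', mllp, mllp']
        ring
      rw [k8]
      exact mul_pos (mul_pos (mul_pos hJ5 hJ2) (by linarith)) hJ1

end M0n
end
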